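/- Let Z(n) be the number of mesh patterns p of length n with μ(1^∅, p) = 0 in the mesh pattern poset, and let T(n) = n!·2^{(n+1)^2} be the total number of mesh patterns of length n. Then Z(n)/T(n) tends to 1 as n tends to infinity. -/

import Mathlib

/-!
# The poset of mesh patterns

A mesh pattern is a permutation of `{1, ..., len}` together with a set of shaded
boxes in the `(len+1) × (len+1)` grid (boxes are indexed by their south-west corner,
so boxes have coordinates in `{0, ..., len} × {0, ..., len}`).

We normalise the permutation as a function `ℕ → ℕ` (using 1-based indexing) which is
`0` outside of `[1, len]`; this makes equality of mesh patterns coincide with equality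
of the underlying data.
-/

structure MeshPattern where
  len : ℕ
  perm : ℕ → ℕ
  sh : Finset (ℕ × ℕ)
  perm_mem : ∀ i, 1 ≤ i → i ≤ len → 1 ≤ perm i ∧ perm i ≤ len
  perm_zero : ∀ i, i = 0 ∨ len < i → perm i = 0
  perm_inj : ∀ i j, 1 ≤ i → i ≤ len → 1 ≤ j → j ≤ len → perm i = perm j → i = j
  perm_surj : ∀ v, 1 ≤ v → v ≤ len → ∃ i, 1 ≤ i ∧ i ≤ len ∧ perm i = v
  sh_mem : ∀ q ∈ sh, q.1 ≤ len ∧ q.2 ≤ len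

namespace MeshPattern

/-- The (1-based) position of the value `v` in the underlying permutation of `m`. -/
noncomputable def pos (m : MeshPattern) (v : ℕ) : ℕ := Function.invFun m.perm v

/-- The dimension of a mesh pattern: length of the permutation plus number of shaded boxes. -/
def dim (m : MeshPattern) : ℕ := m.len + m.sh.card

/-- Given (the position map of an occurrence) `η` of `m` in `p`, the extended column
boundary map: pattern column boundary `i` (for `0 ≤ i ≤ m.len + 1`) is sent to the
corresponding column boundary in `p`.  Boxes of `p` with first coordinate `a` satisfying
`colExt m p η i ≤ a < colExt m p η (i+1)` are exactly the boxes lying horizontally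
within the region corresponding to pattern boxes with first coordinate `i`. -/
def colExt (m p : MeshPattern) (η : ℕ → ℕ) (i : ℕ) : ℕ :=
  if i = 0 then 0 else if i ≤ m.len then η i else p.len + 1

/-- The analogous extended row (value) boundary map. -/
noncomputable def valExt (m p : MeshPattern) (η : ℕ → ℕ) (j : ℕ) : ℕ :=
  if j = 0 then 0 else if j ≤ m.len then p.perm (η (m.pos j)) else p.len + 1

/-- The box `(a, b)` of `p` lies in the region `R_η(i, j)` of the box `(i, j)` of `m`. -/
def inRegion (m p : MeshPattern) (η : ℕ → ℕ) (i j a b : ℕ) : Prop :=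
  colExt m p η i ≤ a ∧ a < colExt m p η (i + 1) ∧
    valExt m p η j ≤ b ∧ b < valExt m p η (j + 1)

/-- The point of `p` at position `y` lies in the open interior of the region `R_η(i, j)`. -/
def interiorPt (m p : MeshPattern) (η : ℕ → ℕ) (i j y : ℕ) : Prop :=
  colExt m p η i < y ∧ y < colExt m p η (i + 1) ∧
    valExt m p η j < p.perm y ∧ p.perm y < valExt m p η (j + 1)

/-- `η` is an occurrence of the mesh pattern `m` in the mesh pattern `p`:
a (normalised) strictly increasing choice of positions realising the underlying
classical pattern, such that for every shaded box of `m` the corresponding region of `p`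
contains no point of `p` in its interior and consists entirely of shaded boxes of `p`. -/
structure IsOcc (m p : MeshPattern) (η : ℕ → ℕ) : Prop where
  zero : ∀ i, i = 0 ∨ m.len < i → η i = 0
  mem : ∀ i, 1 ≤ i → i ≤ m.len → 1 ≤ η i ∧ η i ≤ p.len
  mono : ∀ i j, 1 ≤ i → i < j → j ≤ m.len → η i < η j
  pattern : ∀ i j, 1 ≤ i → i ≤ m.len → 1 ≤ j → j ≤ m.len →
    (m.perm i < m.perm j ↔ p.perm (η i) < p.perm (η j))
  no_point : ∀ q ∈ m.sh, ∀ y, 1 ≤ y → y ≤ p.len → ¬ interiorPt m p η q.1 q.2 y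
  shaded : ∀ q ∈ m.sh, ∀ a b, inRegion m p η q.1 q.2 a b → (a, b) ∈ p.sh

/-- The mesh pattern poset: `m ≤ p` iff there is an occurrence of `m` in `p`. -/
instance : LE MeshPattern := ⟨fun m p => ∃ η, IsOcc m p η⟩

instance : LT MeshPattern := ⟨fun m p => m ≤ p ∧ m ≠ p⟩

/-- `b` covers `a` in the mesh pattern poset. -/
def CovByM (a b : MeshPattern) : Prop := a < b ∧ ¬ ∃ z, a < z ∧ z < b

open Classical in
/-- The Möbius function of a (locally finite) partial order `r`, computed with a fuel
parameter: `muFuel r n a b` is the Möbius function `μ(a, b)` provided `n` is at least the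
length of the longest chain from `a` to `b` (with the convention `μ(a, b) = 0` if
`¬ r a b`). -/
noncomputable def muFuel {α : Type*} (r : α → α → Prop) : ℕ → α → α → ℤ
  | 0, a, b => if a = b then 1 else 0
  | n + 1, a, b =>
      if a = b then 1
      else if r a b then - ∑ᶠ c ∈ {c | r a c ∧ r c b ∧ c ≠ b}, muFuel r n a c
      else 0

/-- The Möbius function of the mesh pattern poset.  Since every chain from `m` to `p` has
length at most `dim p`, the fuel `dim p + 1` is sufficient, so this is the genuine Möbius
function: `mu m m = 1`, `mu m p = -∑_{m ≤ c < p} mu m c` for `m < p`, and `mu m p = 0`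
when `m ≰ p`. -/
noncomputable def mu (m p : MeshPattern) : ℤ := muFuel (· ≤ ·) (p.dim + 1) m p

/-- The classical permutation poset `𝓟`, realised as the subposet of unshaded mesh
patterns (for unshaded patterns, mesh occurrence is exactly classical pattern
containment).  Its Möbius function. -/
noncomputable def muP (σ π : {m : MeshPattern // m.sh = ∅}) : ℤ :=
  muFuel (· ≤ ·) (π.1.len + 1) σ π

/-- The mesh pattern with underlying identity permutation of length `n`
and shaded boxes `s`. -/
def ofId (n : ℕ) (s : Finset (ℕ × ℕ)) (hs : ∀ q ∈ s, q.1 ≤ n ∧ q.2 ≤ n) : MeshPattern where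
  len := n
  perm := fun i => if 1 ≤ i ∧ i ≤ n then i else 0
  sh := s
  perm_mem := by intro i h1 h2; (try dsimp only); rw [if_pos ⟨h1, h2⟩]; omega
  perm_zero := by intro i h; (try dsimp only); rw [if_neg]; omega
  perm_inj := by intro i j h1 h2 h3 h4 h; (try dsimp only at h); rw [if_pos ⟨h1, h2⟩, if_pos ⟨h3, h4⟩] at h; omega
  perm_surj := by
    intro v h1 h2; exact ⟨v, h1, h2, by (try dsimp only); rw [if_pos ⟨h1, h2⟩]⟩
  sh_mem := hs

/-- The mesh pattern with underlying decreasing permutation of length `n`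
and shaded boxes `s`. -/
def ofRev (n : ℕ) (s : Finset (ℕ × ℕ)) (hs : ∀ q ∈ s, q.1 ≤ n ∧ q.2 ≤ n) : MeshPattern where
  len := n
  perm := fun i => if 1 ≤ i ∧ i ≤ n then n + 1 - i else 0
  sh := s
  perm_mem := by intro i h1 h2; (try dsimp only); rw [if_pos ⟨h1, h2⟩]; omega
  perm_zero := by intro i h; (try dsimp only); rw [if_neg]; omega
  perm_inj := by intro i j h1 h2 h3 h4 h; (try dsimp only at h); rw [if_pos ⟨h1, h2⟩, if_pos ⟨h3, h4⟩] at h; omega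
  perm_surj := by
    intro v h1 h2
    exact ⟨n + 1 - v, by omega, by omega, by (try dsimp only); rw [if_pos ⟨by omega, by omega⟩]; omega⟩
  sh_mem := hs

/-- The unshaded singleton mesh pattern `1^∅`. -/
def one0 : MeshPattern := ofId 1 ∅ (by simp)

/-- The empty mesh pattern `ε^∅`. -/
def eps0 : MeshPattern := ofId 0 ∅ (by simp)

/-- The empty mesh pattern `ε^{(0,0)}` with its single box shaded. -/
def eps00 : MeshPattern := ofId 0 {(0, 0)} (by decide)

/-- The singleton mesh patterns `1^{(a,b)}` for `a b ∈ {0,1}`. -/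
def one00 : MeshPattern := ofId 1 {(0, 0)} (by decide)
def one10 : MeshPattern := ofId 1 {(1, 0)} (by decide)
def one01 : MeshPattern := ofId 1 {(0, 1)} (by decide)
def one11 : MeshPattern := ofId 1 {(1, 1)} (by decide)

/-- The mesh pattern `21^{(0,0),(1,0)}`. -/
def pat21 : MeshPattern := ofRev 2 {(0, 0), (1, 0)} (by decide)

/-- Replace the shading of `p` by a subset `A ⊆ sh p` (same underlying permutation):
this is the mesh pattern `(cl p)^A`. -/
def reshade (p : MeshPattern) (A : Finset (ℕ × ℕ)) (hA : A ⊆ p.sh) : MeshPattern :=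
  { p with sh := A, sh_mem := fun q hq => p.sh_mem q (hA hq) }

/-- The occurrence `η` of `s` in `p` uses the shaded box `(a, b) ∈ sh p`. -/
def UsesBox (s p : MeshPattern) (η : ℕ → ℕ) (a b : ℕ) : Prop :=
  (a, b) ∈ p.sh ∧ ∃ i j, (i, j) ∈ s.sh ∧ inRegion s p η i j a b

/-- The position map of the occurrence of `p − x` in `p` avoiding the point at
position `x`. -/
def etaDel (p : MeshPattern) (x : ℕ) : ℕ → ℕ := fun i =>
  if 1 ≤ i ∧ i ≤ p.len - 1 then (if i < x then i else i + 1) else 0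

/-- The underlying permutation of the pattern obtained from `p` by deleting the point at
position `x`. -/
def delPerm (p : MeshPattern) (x : ℕ) : ℕ → ℕ := fun i =>
  if 1 ≤ i ∧ i ≤ p.len - 1 then
    (if p.perm (etaDel p x i) < p.perm x then p.perm (etaDel p x i)
     else p.perm (etaDel p x i) - 1)
  else 0

/-- `q` is the mesh pattern `p − x` obtained from `p` by deleting the point at position
`x` (where `1 ≤ x ≤ len p`): the underlying permutation is obtained by deleting that
letter, and a box of `q` is shaded exactly when the corresponding region of `p` (under
the occurrence `etaDel p x`) is entirely shaded and contains no point of `p` in its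
interior.  In particular `etaDel p x` is an occurrence of `q` in `p`. -/
def IsDeletion (p : MeshPattern) (x : ℕ) (q : MeshPattern) : Prop :=
  1 ≤ x ∧ x ≤ p.len ∧ q.len + 1 = p.len ∧ q.perm = delPerm p x ∧
    ∀ i j : ℕ, ((i, j) ∈ q.sh ↔ i ≤ q.len ∧ j ≤ q.len ∧
      (∀ a b, inRegion q p (etaDel p x) i j a b → (a, b) ∈ p.sh) ∧
      ∀ y, 1 ≤ y → y ≤ p.len → ¬ interiorPt q p (etaDel p x) i j y)

/-- Deleting the point at position `x` of `p` (with `q = p − x`) merges shadings: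
some shaded box of `q` corresponds to more than one shaded box of `p`. -/
def MergesShadings (p : MeshPattern) (x : ℕ) (q : MeshPattern) : Prop :=
  ∃ i j, (i, j) ∈ q.sh ∧ ∃ a b a' b', (a, b) ≠ (a', b') ∧ (a, b) ∈ p.sh ∧
    (a', b') ∈ p.sh ∧ inRegion q p (etaDel p x) i j a b ∧
    inRegion q p (etaDel p x) i j a' b'

/-- `f 0 ⋖ f 1 ⋖ ⋯ ⋖ f k` is a maximal chain of length `k` from `a` to `b`. -/
def IsMaxChain (a b : MeshPattern) (k : ℕ) (f : ℕ → MeshPattern) : Prop :=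
  f 0 = a ∧ f k = b ∧ ∀ i < k, CovByM (f i) (f (i + 1))

/-- Underlying permutation of the direct sum `s ⊕ t`. -/
def dsumPerm (s t : MeshPattern) : ℕ → ℕ := fun i =>
  if i ≤ s.len then s.perm i
  else if i ≤ s.len + t.len then t.perm (i - s.len) + s.len
  else 0

/-- Shading of the direct sum `s ⊕ t`: the shadings of `s` and of `t` (translated), where
boxes on the shared boundary are extended to the new boundary (north/east for boxes of
`s`, south/west for boxes of `t`). -/
def dsumSh (s t : MeshPattern) : Finset (ℕ × ℕ) :=
  s.sh ∪ t.sh.image (fun q => (q.1 + s.len, q.2 + s.len)) ∪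
    (s.sh.filter (fun q => q.2 = s.len)).biUnion
      (fun q => (Finset.range (t.len + 1)).image (fun k => (q.1, s.len + k))) ∪
    (s.sh.filter (fun q => q.1 = s.len)).biUnion
      (fun q => (Finset.range (t.len + 1)).image (fun k => (s.len + k, q.2))) ∪
    (t.sh.filter (fun q => q.2 = 0)).biUnion
      (fun q => (Finset.range (s.len + 1)).image (fun k => (q.1 + s.len, k))) ∪
    (t.sh.filter (fun q => q.1 = 0)).biUnion
      (fun q => (Finset.range (s.len + 1)).image (fun k => (k, q.2 + s.len)))

/-- `r = s ⊕ t` is the direct sum of the mesh patterns `s` and `t` (defined when the top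
right corner box of `s` and the bottom left corner box of `t` are not shaded). -/
def IsDSum (s t r : MeshPattern) : Prop :=
  (s.len, s.len) ∉ s.sh ∧ (0, 0) ∉ t.sh ∧
    r.len = s.len + t.len ∧ r.perm = dsumPerm s t ∧ r.sh = dsumSh s t

/-- A mesh pattern is indecomposable if it cannot be written as a direct sum `a ⊕ b`
with neither `a` nor `b` equal to it. -/
def Indecomposable (m : MeshPattern) : Prop :=
  ¬ ∃ s t, s ≠ m ∧ t ≠ m ∧ IsDSum s t m

/-- `SumOfList L m`: `m` is the direct sum of the list `L` of mesh patterns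
(the empty list summing to the empty pattern `ε^∅`). -/
def SumOfList : List MeshPattern → MeshPattern → Prop
  | [], m => m.len = 0 ∧ m.sh = ∅
  | [a], m => a = m
  | a :: b :: rest, m => ∃ r, SumOfList (b :: rest) r ∧ IsDSum a r m

/-- Underlying permutation of the skew sum `s ⊖ t`. -/
def sksumPerm (s t : MeshPattern) : ℕ → ℕ := fun i =>
  if i = 0 then 0
  else if i ≤ s.len then s.perm i + t.len
  else if i ≤ s.len + t.len then t.perm (i - s.len)
  else 0

/-- Shading of the skew sum `s ⊖ t` (s placed to the north west of `t`), with boxes on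
the shared boundary extended to the new boundary. -/
def sksumSh (s t : MeshPattern) : Finset (ℕ × ℕ) :=
  s.sh.image (fun q => (q.1, q.2 + t.len)) ∪ t.sh.image (fun q => (q.1 + s.len, q.2)) ∪
    (s.sh.filter (fun q => q.1 = s.len)).biUnion
      (fun q => (Finset.range (t.len + 1)).image (fun k => (s.len + k, q.2 + t.len))) ∪
    (s.sh.filter (fun q => q.2 = 0)).biUnion
      (fun q => (Finset.range (t.len + 1)).image (fun k => (q.1, k))) ∪
    (t.sh.filter (fun q => q.2 = t.len)).biUnion
      (fun q => (Finset.range (s.len + 1)).image (fun k => (q.1 + s.len, t.len + k))) ∪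
    (t.sh.filter (fun q => q.1 = 0)).biUnion
      (fun q => (Finset.range (s.len + 1)).image (fun k => (k, q.2)))

/-- `r = s ⊖ t` is the skew sum of the mesh patterns `s` and `t` (defined when the bottom
right corner box of `s` and the top left corner box of `t` are not shaded). -/
def IsSkewSum (s t r : MeshPattern) : Prop :=
  (s.len, 0) ∉ s.sh ∧ (0, t.len) ∉ t.sh ∧
    r.len = s.len + t.len ∧ r.perm = sksumPerm s t ∧ r.sh = sksumSh s t

/-- A mesh pattern is skew-indecomposable if it cannot be written as a skew sum `a ⊖ b`
with neither `a` nor `b` equal to it. -/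
def SkewIndecomposable (m : MeshPattern) : Prop :=
  ¬ ∃ s t, s ≠ m ∧ t ≠ m ∧ IsSkewSum s t m

/-- Connectivity (zig-zag of comparabilities) inside a subset `I` of the mesh pattern
poset. -/
def ConnIn (I : Set MeshPattern) (a b : MeshPattern) : Prop :=
  Relation.ReflTransGen (fun u v => u ∈ I ∧ v ∈ I ∧ (u ≤ v ∨ v ≤ u)) a b

/-- The interval `[m, p]` is strongly disconnected: its open interior has at least two
connected components each containing more than one element. -/
def StronglyDisconnectedInterval (m p : MeshPattern) : Prop :=
  ∃ a b, (m < a ∧ a < p) ∧ (m < b ∧ b < p) ∧ ¬ ConnIn {c | m < c ∧ c < p} a b ∧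
    (∃ a', (m < a' ∧ a' < p) ∧ a' ≠ a ∧ ConnIn {c | m < c ∧ c < p} a a') ∧
    (∃ b', (m < b' ∧ b' < p) ∧ b' ≠ b ∧ ConnIn {c | m < c ∧ c < p} b b')

/-- The occurrence of `m` in `m ⊕ m` (or `m ⊖ m`) as the first `|m|` points. -/
def eta1 (m : MeshPattern) : ℕ → ℕ := fun i => if 1 ≤ i ∧ i ≤ m.len then i else 0

/-- The occurrence of `m` in `m ⊕ m` (or `m ⊖ m`) as the last `|m|` points. -/
def eta2 (m : MeshPattern) : ℕ → ℕ := fun i => if 1 ≤ i ∧ i ≤ m.len then i + m.len else 0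

/-- `i` (with `2 ≤ i ≤ len`) is the position of an adjacency tail: the letter at
position `i` differs by one from the letter at position `i - 1`. -/
def IsAdjTail (m : MeshPattern) (i : ℕ) : Prop :=
  2 ≤ i ∧ i ≤ m.len ∧ (m.perm i = m.perm (i - 1) + 1 ∨ m.perm (i - 1) = m.perm i + 1)

open Classical in
/-- `adj(cl m)`: the number of adjacency tails of the underlying permutation of `m`. -/
noncomputable def adjCount (m : MeshPattern) : ℕ :=
  ((Finset.range (m.len + 1)).filter (fun i => IsAdjTail m i)).card

/-- The total number of mesh patterns of length `n`. -/
def Tcount (n : ℕ) : ℕ := n.factorial * 2 ^ ((n + 1) ^ 2)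

end MeshPattern

/-- Binary words, partially ordered by (not necessarily contiguous) subword containment:
the poset `𝓦`. -/
structure Word where
  toList : List Bool

instance : LE Word := ⟨fun u w => u.toList.Sublist w.toList⟩

/-- The binary word associated to a mesh pattern `m` in the class `Γ`: it has length
`|m| - 1`, and for each letter `i` with `2 ≤ i ≤ |m|` the corresponding entry is
`false` (i.e. `0`) if the letter `i` appears before the letter `1` in `cl m`,
and `true` (i.e. `1`) otherwise. -/
noncomputable def MeshPattern.wordOf (m : MeshPattern) : List Bool :=
  (List.range (m.len - 1)).map (fun k => if m.pos (k + 2) < m.pos 1 then false else true)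

namespace MeshPattern

/-! ### Basic lemmas -/

lemma ext' {p q : MeshPattern} (h1 : p.len = q.len) (h2 : p.perm = q.perm)
    (h3 : p.sh = q.sh) : p = q := by
  cases p; cases q; simp_all

lemma le_def' {m p : MeshPattern} : m ≤ p ↔ ∃ η, IsOcc m p η := Iff.rfl

lemma one0_len : one0.len = 1 := rfl
lemma one0_sh : one0.sh = ∅ := rfl

section Occ

variable {m p : MeshPattern} {η : ℕ → ℕ} (hη : IsOcc m p η)

include hη

lemma eta_ge : ∀ i, 1 ≤ i → i ≤ m.len → i ≤ η i := by
  intro i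
  induction i with
  | zero => omega
  | succ k ih =>
    intro _ hk
    rcases Nat.eq_zero_or_pos k with hk0 | hk0
    · subst hk0; exact (hη.mem 1 le_rfl hk).1
    · have h1 := ih hk0 (by omega)
      have h2 := hη.mono k (k+1) hk0 (by omega) hk
      omega

lemma len_le_of_occ (h1 : 1 ≤ m.len) : m.len ≤ p.len := by
  have h2 := eta_ge hη m.len h1 le_rfl
  have h3 := (hη.mem m.len h1 le_rfl).2
  omega

end Occ

lemma one0_le {c : MeshPattern} (h : 1 ≤ c.len) : one0 ≤ c := by
  have hl : one0.len = 1 := rfl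
  refine ⟨fun i => if i = 1 then 1 else 0, ?_, ?_, ?_, ?_, ?_, ?_⟩
  · intro i hi
    rw [hl] at hi
    have : i ≠ 1 := by omega
    simp [this]
  · intro i hi1 hi2
    rw [hl] at hi2
    have : i = 1 := by omega
    simp [this, h]
  · intro i j hi hij hj
    rw [hl] at hj
    omega
  · intro i j hi hi' hj hj'
    rw [hl] at hi' hj'
    have h1 : i = 1 := by omega
    have h2 : j = 1 := by omega
    subst h1; subst h2
    simp
  · intro q hq; simp [one0_sh] at hq
  · intro q hq; simp [one0_sh] at hq

lemma len_pos_of_one0_le {c : MeshPattern} (h : one0 ≤ c) : 1 ≤ c.len := by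
  obtain ⟨η, hη⟩ := h
  have h1 : one0.len = 1 := rfl
  have := hη.mem 1 le_rfl (by rw [h1])
  omega

/-! ### colExt / valExt lemmas -/

section Ext

variable {m p : MeshPattern} {η : ℕ → ℕ}

lemma colExt_zero' : colExt m p η 0 = 0 := rfl

lemma colExt_top {i : ℕ} (h : m.len < i) : colExt m p η i = p.len + 1 := by
  have h1 : i ≠ 0 := by omega
  have h2 : ¬ i ≤ m.len := by omega
  simp [colExt, h1, h2]

lemma colExt_val (hη : IsOcc m p η) {i : ℕ} (h1 : 1 ≤ i) (h2 : i ≤ m.len) :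
    colExt m p η i = η i ∧ 1 ≤ η i ∧ η i ≤ p.len := by
  have h3 : i ≠ 0 := by omega
  exact ⟨by simp [colExt, h3, h2], hη.mem i h1 h2⟩

lemma colExt_le_plen (hη : IsOcc m p η) {i : ℕ} (h : i ≤ m.len) : colExt m p η i ≤ p.len := by
  rcases Nat.eq_zero_or_pos i with h0 | h0
  · subst h0; simp [colExt_zero']
  · have := colExt_val hη h0 h
    omega

lemma colExt_succ_lt (hη : IsOcc m p η) {i : ℕ} (h : i ≤ m.len) :
    colExt m p η i < colExt m p η (i + 1) := by
  rcases Nat.eq_zero_or_pos i with h0 | h0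
  · subst h0
    rw [colExt_zero']
    rcases Nat.lt_or_ge m.len 1 with h1 | h1
    · rw [colExt_top (by omega)]; omega
    · obtain ⟨he, h2, h3⟩ := colExt_val hη le_rfl h1
      rw [Nat.zero_add, he]; omega
  · obtain ⟨he, h2, h3⟩ := colExt_val hη h0 h
    rcases Nat.lt_or_ge m.len (i+1) with h1 | h1
    · rw [colExt_top h1, he]; omega
    · obtain ⟨he1, h4, h5⟩ := colExt_val hη (by omega) h1
      have := hη.mono i (i+1) h0 (by omega) h1
      rw [he, he1]; omega

lemma colExt_mono_succ (hη : IsOcc m p η) (i : ℕ) : colExt m p η i ≤ colExt m p η (i + 1) := by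
  rcases Nat.lt_or_ge m.len i with h | h
  · rw [colExt_top h, colExt_top (by omega)]
  · exact le_of_lt (colExt_succ_lt hη h)

lemma colExt_mono (hη : IsOcc m p η) {i j : ℕ} (h : i ≤ j) : colExt m p η i ≤ colExt m p η j := by
  induction j with
  | zero => have : i = 0 := by omega
            subst this; rfl
  | succ k ih =>
    rcases Nat.lt_or_ge i (k+1) with h1 | h1
    · exact le_trans (ih (by omega)) (colExt_mono_succ hη k)
    · have : i = k + 1 := by omega
      subst this; rfl

lemma colExt_strict_mono (hη : IsOcc m p η) {i j : ℕ} (h : i < j) (hj : j ≤ m.len + 1) :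
    colExt m p η i < colExt m p η j := by
  have h1 : colExt m p η i < colExt m p η (i+1) := colExt_succ_lt hη (by omega)
  exact lt_of_lt_of_le h1 (colExt_mono hη (by omega))

lemma colExt_le_plen_succ (hη : IsOcc m p η) (i : ℕ) : colExt m p η i ≤ p.len + 1 := by
  rcases Nat.lt_or_ge m.len i with h | h
  · rw [colExt_top h]
  · have := colExt_le_plen hη h; omega

/-! positions -/

lemma pos_spec {v : ℕ} (h1 : 1 ≤ v) (h2 : v ≤ m.len) :
    m.perm (m.pos v) = v ∧ 1 ≤ m.pos v ∧ m.pos v ≤ m.len := by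
  obtain ⟨i, hi1, hi2, hi3⟩ := m.perm_surj v h1 h2
  have key : m.perm (m.pos v) = v := by
    have : Function.invFun m.perm v = m.pos v := rfl
    rw [← this]
    exact Function.invFun_eq ⟨i, hi3⟩
  refine ⟨key, ?_, ?_⟩
  · by_contra h
    have : m.pos v = 0 := by omega
    rw [this] at key
    rw [m.perm_zero 0 (Or.inl rfl)] at key
    omega
  · by_contra h
    rw [m.perm_zero (m.pos v) (Or.inr (by omega))] at key
    omega

lemma pos_perm {i : ℕ} (h1 : 1 ≤ i) (h2 : i ≤ m.len) : m.pos (m.perm i) = i := by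
  have hv := m.perm_mem i h1 h2
  have h3 := pos_spec (m := m) hv.1 hv.2
  exact m.perm_inj _ _ h3.2.1 h3.2.2 h1 h2 (by rw [h3.1])

lemma valExt_zero' : valExt m p η 0 = 0 := by simp [valExt]

lemma valExt_top {j : ℕ} (h : m.len < j) : valExt m p η j = p.len + 1 := by
  have h1 : j ≠ 0 := by omega
  have h2 : ¬ j ≤ m.len := by omega
  simp [valExt, h1, h2]

lemma valExt_val (hη : IsOcc m p η) {j : ℕ} (h1 : 1 ≤ j) (h2 : j ≤ m.len) :
    valExt m p η j = p.perm (η (m.pos j)) ∧ 1 ≤ valExt m p η j ∧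
      valExt m p η j ≤ p.len := by
  have h3 : j ≠ 0 := by omega
  have hp := pos_spec (m := m) h1 h2
  have hmem := hη.mem (m.pos j) hp.2.1 hp.2.2
  have hv := p.perm_mem (η (m.pos j)) hmem.1 hmem.2
  exact ⟨by simp [valExt, h3, h2], by simp [valExt, h3, h2]; omega,
    by simp [valExt, h3, h2]; omega⟩

lemma valExt_succ_lt (hη : IsOcc m p η) {j : ℕ} (h : j ≤ m.len) :
    valExt m p η j < valExt m p η (j + 1) := by
  rcases Nat.eq_zero_or_pos j with h0 | h0
  · subst h0
    rw [valExt_zero']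
    rcases Nat.lt_or_ge m.len 1 with h1 | h1
    · rw [valExt_top (by omega)]; omega
    · obtain ⟨he, h2, h3⟩ := valExt_val hη le_rfl h1
      rw [Nat.zero_add]; omega
  · obtain ⟨hje, hj2, hj3⟩ := valExt_val hη h0 h
    rcases Nat.lt_or_ge m.len (j+1) with h1 | h1
    · rw [valExt_top h1]; omega
    · have hj1 := valExt_val hη (by omega) h1
      have hpj := pos_spec (m := m) h0 h
      have hpj1 := pos_spec (m := m) (v := j+1) (by omega) h1
      have hpat := hη.pattern (m.pos j) (m.pos (j+1)) hpj.2.1 hpj.2.2 hpj1.2.1 hpj1.2.2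
      rw [hpj.1, hpj1.1] at hpat
      have hlt : p.perm (η (m.pos j)) < p.perm (η (m.pos (j+1))) := hpat.1 (by omega)
      rw [hje, hj1.1]; omega

lemma valExt_mono_succ (hη : IsOcc m p η) (j : ℕ) : valExt m p η j ≤ valExt m p η (j + 1) := by
  rcases Nat.lt_or_ge m.len j with h | h
  · rw [valExt_top h, valExt_top (by omega)]
  · exact le_of_lt (valExt_succ_lt hη h)

lemma valExt_mono (hη : IsOcc m p η) {i j : ℕ} (h : i ≤ j) : valExt m p η i ≤ valExt m p η j := by
  induction j with
  | zero => have : i = 0 := by omega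
            subst this; rfl
  | succ k ih =>
    rcases Nat.lt_or_ge i (k+1) with h1 | h1
    · exact le_trans (ih (by omega)) (valExt_mono_succ hη k)
    · have : i = k + 1 := by omega
      subst this; rfl

lemma valExt_le_plen (hη : IsOcc m p η) {j : ℕ} (h : j ≤ m.len) : valExt m p η j ≤ p.len := by
  rcases Nat.eq_zero_or_pos j with h0 | h0
  · subst h0; rw [valExt_zero']; omega
  · exact (valExt_val hη h0 h).2.2

/-! slot-finding -/

open Classical in
lemma col_slot (hη : IsOcc m p η) {a : ℕ} (h : a ≤ p.len) :
    ∃ i, i ≤ m.len ∧ colExt m p η i ≤ a ∧ a < colExt m p η (i + 1) := by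
  classical
  set P : ℕ → Prop := fun i => colExt m p η i ≤ a with hP
  have hP0 : P 0 := by simp [hP, colExt_zero']
  set i := Nat.findGreatest P m.len with hi
  have hile : i ≤ m.len := Nat.findGreatest_le m.len
  have hPi : P i := Nat.findGreatest_spec (Nat.zero_le _) hP0
  refine ⟨i, hile, hPi, ?_⟩
  by_contra hcon
  push_neg at hcon
  rcases Nat.lt_or_ge m.len (i+1) with h1 | h1
  · rw [colExt_top h1] at hcon; omega
  · have hgr : ¬ P (i+1) := Nat.findGreatest_is_greatest (by omega) h1
    exact hgr hcon

open Classical in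
lemma val_slot (hη : IsOcc m p η) {b : ℕ} (h : b ≤ p.len) :
    ∃ j, j ≤ m.len ∧ valExt m p η j ≤ b ∧ b < valExt m p η (j + 1) := by
  classical
  set P : ℕ → Prop := fun j => valExt m p η j ≤ b with hP
  have hP0 : P 0 := by simp [hP, valExt_zero']
  set j := Nat.findGreatest P m.len with hj
  have hjle : j ≤ m.len := Nat.findGreatest_le m.len
  have hPj : P j := Nat.findGreatest_spec (Nat.zero_le _) hP0
  refine ⟨j, hjle, hPj, ?_⟩
  by_contra hcon
  push_neg at hcon
  rcases Nat.lt_or_ge m.len (j+1) with h1 | h1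
  · rw [valExt_top h1] at hcon; omega
  · have hgr : ¬ P (j+1) := Nat.findGreatest_is_greatest (by omega) h1
    exact hgr hcon

open Classical in
lemma col_slot_strict (hη : IsOcc m p η) {y : ℕ} (h1 : 1 ≤ y) (h2 : y ≤ p.len)
    (hy : ∀ i, 1 ≤ i → i ≤ m.len → η i ≠ y) :
    ∃ i, i ≤ m.len ∧ colExt m p η i < y ∧ y < colExt m p η (i + 1) := by
  classical
  set P : ℕ → Prop := fun i => colExt m p η i < y with hP
  have hP0 : P 0 := by simp [hP, colExt_zero']; omega
  set i := Nat.findGreatest P m.len with hi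
  have hile : i ≤ m.len := Nat.findGreatest_le m.len
  have hPi : P i := Nat.findGreatest_spec (Nat.zero_le _) hP0
  refine ⟨i, hile, hPi, ?_⟩
  by_contra hcon
  push_neg at hcon
  rcases Nat.lt_or_ge m.len (i+1) with hl | hl
  · rw [colExt_top hl] at hcon; omega
  · have hne : colExt m p η (i+1) ≠ y := by
      rw [(colExt_val hη (by omega) hl).1]
      exact hy (i+1) (by omega) hl
    have hgr : ¬ P (i+1) := Nat.findGreatest_is_greatest (by omega) hl
    exact hgr (show colExt m p η (i+1) < y by omega)

open Classical in
lemma val_slot_strict (hη : IsOcc m p η) {y : ℕ} (h1 : 1 ≤ y) (h2 : y ≤ p.len)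
    (hy : ∀ i, 1 ≤ i → i ≤ m.len → η i ≠ y) :
    ∃ j, j ≤ m.len ∧ valExt m p η j < p.perm y ∧ p.perm y < valExt m p η (j + 1) := by
  classical
  obtain ⟨hv1, hv2⟩ := p.perm_mem y h1 h2
  set P : ℕ → Prop := fun j => valExt m p η j < p.perm y with hP
  have hP0 : P 0 := by simp [hP, valExt_zero']; omega
  set j := Nat.findGreatest P m.len with hj
  have hjle : j ≤ m.len := Nat.findGreatest_le m.len
  have hPj : P j := Nat.findGreatest_spec (Nat.zero_le _) hP0
  refine ⟨j, hjle, hPj, ?_⟩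
  by_contra hcon
  push_neg at hcon
  rcases Nat.lt_or_ge m.len (j+1) with hl | hl
  · rw [valExt_top hl] at hcon; omega
  · have hne : valExt m p η (j+1) ≠ p.perm y := by
      rw [(valExt_val hη (by omega) hl).1]
      intro heq
      have hpos := pos_spec (m := m) (v := j+1) (by omega) hl
      have hmem := hη.mem (m.pos (j+1)) hpos.2.1 hpos.2.2
      have := p.perm_inj _ _ hmem.1 hmem.2 h1 h2 heq
      exact hy (m.pos (j+1)) hpos.2.1 hpos.2.2 this
    have hgr : ¬ P (j+1) := Nat.findGreatest_is_greatest (by omega) hl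
    exact hgr (show valExt m p η (j+1) < p.perm y by omega)

end Ext

end MeshPattern

namespace MeshPattern

/-! ### Nice patterns -/

/-- The box `(i,j)` of `q` lies in an edge-spanning, fully shaded rectangle of boxes
with no point of `q` strictly inside its span. -/
def NiceAt (q : MeshPattern) (i j : ℕ) : Prop :=
  ∃ i₁ i₂ j₁ j₂ : ℕ, i₁ ≤ i ∧ i ≤ i₂ ∧ i₂ ≤ q.len ∧ j₁ ≤ j ∧ j ≤ j₂ ∧ j₂ ≤ q.len ∧
    (i₁ = 0 ∨ i₂ = q.len ∨ j₁ = 0 ∨ j₂ = q.len) ∧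
    (∀ a b, i₁ ≤ a → a ≤ i₂ → j₁ ≤ b → b ≤ j₂ → (a, b) ∈ q.sh) ∧
    (∀ y, 1 ≤ y → y ≤ q.len → i₁ < y → y ≤ i₂ →
      ¬(j₁ < q.perm y ∧ q.perm y ≤ j₂))

def Nice (q : MeshPattern) : Prop := ∀ i j, (i, j) ∈ q.sh → NiceAt q i j

section Occ2

variable {m p : MeshPattern} {η : ℕ → ℕ}

lemma eta_le (hη : IsOcc m p η) {i j : ℕ} (h1 : 1 ≤ i) (h2 : i ≤ j) (h3 : j ≤ m.len) :
    η i ≤ η j := by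
  rcases Nat.eq_or_lt_of_le h2 with h | h
  · subst h; rfl
  · exact le_of_lt (hη.mono i j h1 h h3)

/-- The core transfer lemma: a region of a nicely-placed shaded box of `m` gives
nicely-placed shaded boxes of `p`. -/
lemma niceAt_transfer (hη : IsOcc m p η) {i j a b : ℕ} (hij : (i, j) ∈ m.sh)
    (hN : NiceAt m i j) (hab : inRegion m p η i j a b) : NiceAt p a b := by
  obtain ⟨hi_le, hj_le⟩ := m.sh_mem (i, j) hij
  obtain ⟨i₁, i₂, j₁, j₂, h1, h2, h3, h4, h5, h6, hspan, hfull, hpt⟩ := hN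
  obtain ⟨hr1, hr2, hr3, hr4⟩ := hab
  set I₁ := colExt m p η i₁ with hI₁
  set V := colExt m p η (i₂ + 1) with hV
  set J₁ := valExt m p η j₁ with hJ₁
  set W := valExt m p η (j₂ + 1) with hW
  have hVle : V ≤ p.len + 1 := colExt_le_plen_succ hη _
  have hWle : W ≤ p.len + 1 := by
    rcases Nat.lt_or_ge m.len (j₂ + 1) with h | h
    · rw [hW, valExt_top h]
    · have := valExt_le_plen hη h; omega
  have haI : I₁ ≤ a := le_trans (colExt_mono hη h1) hr1
  have haV : a < V := lt_of_lt_of_le hr2 (colExt_mono hη (by omega))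
  have hbJ : J₁ ≤ b := le_trans (valExt_mono hη h4) hr3
  have hbW : b < W := lt_of_lt_of_le hr4 (valExt_mono hη (by omega))
  refine ⟨I₁, V - 1, J₁, W - 1, haI, by omega, by omega, hbJ, by omega, by omega,
    ?_, ?_, ?_⟩
  · -- spanning
    rcases hspan with h | h | h | h
    · left; rw [hI₁, h]; rfl
    · right; left
      have : V = p.len + 1 := by rw [hV, h]; exact colExt_top (by omega)
      omega
    · right; right; left; rw [hJ₁, h]; exact valExt_zero'
    · right; right; right
      have : W = p.len + 1 := by rw [hW, h]; exact valExt_top (by omega)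
      omega
  · -- fully shaded
    intro a' b' ha1 ha2 hb1 hb2
    have ha'le : a' ≤ p.len := by omega
    have hb'le : b' ≤ p.len := by omega
    obtain ⟨i', hi'1, hi'2, hi'3⟩ := col_slot hη (m := m) ha'le
    obtain ⟨j', hj'1, hj'2, hj'3⟩ := val_slot hη (m := m) hb'le
    have hii1 : i₁ ≤ i' := by
      by_contra hcon
      have : colExt m p η (i' + 1) ≤ I₁ := colExt_mono hη (by omega)
      omega
    have hii2 : i' ≤ i₂ := by
      by_contra hcon
      have : V ≤ colExt m p η i' := colExt_mono hη (by omega)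
      omega
    have hjj1 : j₁ ≤ j' := by
      by_contra hcon
      have : valExt m p η (j' + 1) ≤ J₁ := valExt_mono hη (by omega)
      omega
    have hjj2 : j' ≤ j₂ := by
      by_contra hcon
      have : W ≤ valExt m p η j' := valExt_mono hη (by omega)
      omega
    exact hη.shaded (i', j') (hfull i' j' hii1 hii2 hjj1 hjj2) a' b'
      ⟨hi'2, hi'3, hj'2, hj'3⟩
  · -- pointless
    intro y hy1 hy2 hyI hyV hcontra
    obtain ⟨hc1, hc2⟩ := hcontra
    have hyV' : y < V := by omega
    have hpermW : p.perm y < W := by omega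
    by_cases hcase : ∃ i₀, 1 ≤ i₀ ∧ i₀ ≤ m.len ∧ η i₀ = y
    · obtain ⟨i₀, hi₀1, hi₀2, hi₀3⟩ := hcase
      obtain ⟨hw1, hw2⟩ := m.perm_mem i₀ hi₀1 hi₀2
      have hvw : valExt m p η (m.perm i₀) = p.perm y := by
        have hps := pos_perm (m := m) hi₀1 hi₀2
        have h := (valExt_val hη (j := m.perm i₀) hw1 hw2).1
        rw [h, hps, hi₀3]
      have hwj1 : j₁ < m.perm i₀ := by
        by_contra hcon
        have : valExt m p η (m.perm i₀) ≤ J₁ := valExt_mono hη (by omega)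
        omega
      have hwj2 : m.perm i₀ ≤ j₂ := by
        by_contra hcon
        have : W ≤ valExt m p η (m.perm i₀) := valExt_mono hη (by omega)
        omega
      -- i₁ < i₀
      have hi₀i1 : i₁ < i₀ := by
        rcases Nat.eq_zero_or_pos i₁ with h0 | h0
        · omega
        · by_contra hcon
          have hle : η i₀ ≤ η i₁ := eta_le hη hi₀1 (by omega) (by omega)
          have : colExt m p η i₁ = η i₁ := (colExt_val hη h0 (by omega)).1
          omega
      have hi₀i2 : i₀ ≤ i₂ := by
        rcases Nat.lt_or_ge m.len (i₂ + 1) with hc | hc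
        · omega
        · by_contra hcon
          have hle : η (i₂ + 1) ≤ η i₀ := eta_le hη (by omega) (by omega) hi₀2
          have : colExt m p η (i₂ + 1) = η (i₂ + 1) := (colExt_val hη (by omega) hc).1
          omega
      exact hpt i₀ hi₀1 hi₀2 hi₀i1 hi₀i2 ⟨by omega, hwj2⟩
    · push_neg at hcase
      have hy' : ∀ i', 1 ≤ i' → i' ≤ m.len → η i' ≠ y := fun i' h1' h2' =>
        hcase i' h1' h2'
      obtain ⟨i', hi'1, hi'2, hi'3⟩ := col_slot_strict hη hy1 hy2 hy'
      obtain ⟨j', hj'1, hj'2, hj'3⟩ := val_slot_strict hη hy1 hy2 hy'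
      have hii1 : i₁ ≤ i' := by
        by_contra hcon
        have : colExt m p η (i' + 1) ≤ I₁ := colExt_mono hη (by omega)
        omega
      have hii2 : i' ≤ i₂ := by
        by_contra hcon
        have : V ≤ colExt m p η i' := colExt_mono hη (by omega)
        omega
      have hjj1 : j₁ ≤ j' := by
        by_contra hcon
        have : valExt m p η (j' + 1) ≤ J₁ := valExt_mono hη (by omega)
        omega
      have hjj2 : j' ≤ j₂ := by
        by_contra hcon
        have : W ≤ valExt m p η j' := valExt_mono hη (by omega)
        omega
      exact hη.no_point (i', j') (hfull i' j' hii1 hii2 hjj1 hjj2) y hy1 hy2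
        ⟨hi'2, hi'3, hj'2, hj'3⟩

end Occ2

/-! ### Reshading lemmas -/

lemma reshade_len {p : MeshPattern} {A : Finset (ℕ × ℕ)} (hA : A ⊆ p.sh) :
    (reshade p A hA).len = p.len := rfl

lemma reshade_perm {p : MeshPattern} {A : Finset (ℕ × ℕ)} (hA : A ⊆ p.sh) :
    (reshade p A hA).perm = p.perm := rfl

lemma reshade_sh {p : MeshPattern} {A : Finset (ℕ × ℕ)} (hA : A ⊆ p.sh) :
    (reshade p A hA).sh = A := rfl

lemma reshade_self (p : MeshPattern) : reshade p p.sh (le_refl _) = p := by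
  apply ext' <;> rfl

lemma isOcc_reshade_mono {c p : MeshPattern} {A B : Finset (ℕ × ℕ)}
    (hA : A ⊆ p.sh) (hB : B ⊆ p.sh) (hAB : A ⊆ B) {η : ℕ → ℕ}
    (hη : IsOcc c (reshade p A hA) η) : IsOcc c (reshade p B hB) η :=
  ⟨hη.zero, hη.mem, hη.mono, hη.pattern, hη.no_point,
    fun q hq a b h => hAB (hη.shaded q hq a b h)⟩

lemma isOcc_reshade_to_p {c p : MeshPattern} {A : Finset (ℕ × ℕ)}
    (hA : A ⊆ p.sh) {η : ℕ → ℕ}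
    (hη : IsOcc c (reshade p A hA) η) : IsOcc c p η := by
  have := isOcc_reshade_mono hA (le_refl p.sh) hA hη
  rwa [reshade_self] at this

/-- If an occurrence into a larger reshading avoids the box `β` in all its shaded
regions, it is an occurrence into the smaller reshading. -/
lemma isOcc_reshade_avoid {c p : MeshPattern} {A B : Finset (ℕ × ℕ)}
    (hA : A ⊆ p.sh) (hB : B ⊆ p.sh) {β : ℕ × ℕ}
    (hBA : B ⊆ insert β A) {η : ℕ → ℕ}
    (hη : IsOcc c (reshade p B hB) η)
    (havoid : ∀ i j, (i, j) ∈ c.sh → ¬ inRegion c p η i j β.1 β.2) :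
    IsOcc c (reshade p A hA) η := by
  refine ⟨hη.zero, hη.mem, hη.mono, hη.pattern, hη.no_point, ?_⟩
  intro q hq a b h
  have h1 : (a, b) ∈ insert β A := hBA (hη.shaded q hq a b h)
  rcases Finset.mem_insert.mp h1 with h2 | h2
  · exfalso
    subst h2
    exact havoid q.1 q.2 hq h
  · exact h2

/-! ### The identity occurrence between reshadings -/

lemma isOcc_id_reshade {p : MeshPattern} {A B : Finset (ℕ × ℕ)}
    (hA : A ⊆ p.sh) (hB : B ⊆ p.sh) (hAB : A ⊆ B) :
    IsOcc (reshade p A hA) (reshade p B hB)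
      (fun i => if 1 ≤ i ∧ i ≤ p.len then i else 0) := by
  set η : ℕ → ℕ := fun i => if 1 ≤ i ∧ i ≤ p.len then i else 0 with hdef
  have hband : ∀ i, 1 ≤ i → i ≤ p.len → η i = i := by
    intro i h1 h2; simp [hdef, h1, h2]
  have hcol : ∀ i, i ≤ p.len →
      colExt (reshade p A hA) (reshade p B hB) η i = i := by
    intro i hi
    rcases Nat.eq_zero_or_pos i with h0 | h0
    · subst h0; rfl
    · have : i ≠ 0 := by omega
      simp only [colExt, reshade_len, this, if_false, hi, if_true]
      exact hband i h0 hi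
  have hcolS : ∀ i, i ≤ p.len →
      colExt (reshade p A hA) (reshade p B hB) η (i+1) = i + 1 := by
    intro i hi
    rcases Nat.lt_or_ge p.len (i+1) with h1 | h1
    · have h2 : i + 1 = p.len + 1 := by omega
      rw [h2]
      have : colExt (reshade p A hA) (reshade p B hB) η (p.len + 1) =
          (reshade p B hB).len + 1 := colExt_top (by rw [reshade_len]; omega)
      rw [this, reshade_len]
    · exact hcol (i+1) h1
  have hval : ∀ j, j ≤ p.len →
      valExt (reshade p A hA) (reshade p B hB) η j = j := by
    intro j hj
    rcases Nat.eq_zero_or_pos j with h0 | h0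
    · subst h0; simp [valExt]
    · have hj0 : j ≠ 0 := by omega
      have hps := pos_spec (m := reshade p A hA) (v := j) h0 (by rw [reshade_len]; exact hj)
      rw [reshade_len] at hps
      simp only [valExt, reshade_len, hj0, if_false, hj, if_true, reshade_perm]
      rw [hband _ hps.2.1 hps.2.2]
      have : (reshade p A hA).perm ((reshade p A hA).pos j) = j := hps.1
      rwa [reshade_perm] at this
  have hvalS : ∀ j, j ≤ p.len →
      valExt (reshade p A hA) (reshade p B hB) η (j+1) = j + 1 := by
    intro j hj
    rcases Nat.lt_or_ge p.len (j+1) with h1 | h1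
    · have h2 : j + 1 = p.len + 1 := by omega
      rw [h2]
      have : valExt (reshade p A hA) (reshade p B hB) η (p.len + 1) =
          (reshade p B hB).len + 1 := valExt_top (by rw [reshade_len]; omega)
      rw [this, reshade_len]
    · exact hval (j+1) h1
  refine ⟨?_, ?_, ?_, ?_, ?_, ?_⟩
  · intro i hi
    rcases hi with h | h
    · simp [hdef, h]
    · rw [reshade_len] at h
      have : ¬ (1 ≤ i ∧ i ≤ p.len) := by omega
      simp [hdef, this]
  · intro i h1 h2
    rw [reshade_len] at h2 ⊢
    rw [hband i h1 h2]; omega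
  · intro i j h1 h2 h3
    rw [reshade_len] at h3
    rw [hband i h1 (by omega), hband j (by omega) h3]; omega
  · intro i j h1 h2 h3 h4
    rw [reshade_len] at h2 h4
    rw [hband i h1 h2, hband j h3 h4]
    simp [reshade_perm]
  · intro q hq y hy1 hy2
    intro hint
    obtain ⟨hq1, hq2⟩ := (reshade p A hA).sh_mem q hq
    rw [reshade_len] at hq1 hq2 hy2
    obtain ⟨ha1, ha2, _, _⟩ := hint
    rw [hcol q.1 hq1] at ha1
    rw [hcolS q.1 hq1] at ha2
    omega
  · intro q hq a b hab
    obtain ⟨hq1, hq2⟩ := (reshade p A hA).sh_mem q hq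
    rw [reshade_len] at hq1 hq2
    obtain ⟨ha1, ha2, hb1, hb2⟩ := hab
    rw [hcol q.1 hq1] at ha1
    rw [hcolS q.1 hq1] at ha2
    rw [hval q.2 hq2] at hb1
    rw [hvalS q.2 hq2] at hb2
    have : (a, b) = q := by
      have : a = q.1 := by omega
      have hb : b = q.2 := by omega
      simp [this, hb]
    rw [this]
    exact hAB (by simpa [reshade_sh] using hq)

lemma reshade_le {p : MeshPattern} {A B : Finset (ℕ × ℕ)}
    (hA : A ⊆ p.sh) (hB : B ⊆ p.sh) (hAB : A ⊆ B) :
    reshade p A hA ≤ reshade p B hB :=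
  ⟨_, isOcc_id_reshade hA hB hAB⟩

end MeshPattern

namespace MeshPattern

/-! ### Permutations are determined by their relative order -/

lemma card_filter_perm_le (m : MeshPattern) {a : ℕ} (ha : a ≤ m.len) :
    (((Finset.Icc 1 m.len)).filter (fun l => m.perm l ≤ a)).card = a := by
  classical
  have himg : (((Finset.Icc 1 m.len)).filter (fun l => m.perm l ≤ a)).image m.perm
      = Finset.Icc 1 a := by
    ext v
    simp only [Finset.mem_image, Finset.mem_filter, Finset.mem_Icc]
    constructor
    · rintro ⟨l, ⟨⟨hl1, hl2⟩, hl3⟩, rfl⟩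
      exact ⟨(m.perm_mem l hl1 hl2).1, hl3⟩
    · rintro ⟨hv1, hv2⟩
      obtain ⟨i, h1, h2, h3⟩ := m.perm_surj v hv1 (le_trans hv2 ha)
      exact ⟨i, ⟨⟨h1, h2⟩, by omega⟩, h3⟩
  have hinj : Set.InjOn m.perm
      ((((Finset.Icc 1 m.len)).filter (fun l => m.perm l ≤ a)) : Finset ℕ) := by
    intro x hx y hy hxy
    simp only [Finset.coe_filter, Set.mem_setOf_eq, Finset.mem_Icc] at hx hy
    exact m.perm_inj x y hx.1.1 hx.1.2 hy.1.1 hy.1.2 hxy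
  have := Finset.card_image_of_injOn hinj
  rw [himg] at this
  rw [← this, Nat.card_Icc]
  omega

lemma perm_eq_of_orderIso {m p : MeshPattern} (hlen : m.len = p.len)
    (hpat : ∀ i j, 1 ≤ i → i ≤ m.len → 1 ≤ j → j ≤ m.len →
      (m.perm i < m.perm j ↔ p.perm i < p.perm j)) : m.perm = p.perm := by
  classical
  funext i
  rcases Nat.eq_zero_or_pos i with h0 | h0
  · rw [m.perm_zero i (Or.inl h0), p.perm_zero i (Or.inl h0)]
  rcases Nat.lt_or_ge m.len i with hbig | hle
  · rw [m.perm_zero i (Or.inr hbig), p.perm_zero i (Or.inr (by omega))]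
  · have hfe : ((Finset.Icc 1 m.len)).filter (fun l => m.perm l ≤ m.perm i)
        = ((Finset.Icc 1 m.len)).filter (fun l => p.perm l ≤ p.perm i) := by
      apply Finset.filter_congr
      intro l hl
      simp only [Finset.mem_Icc] at hl
      have h1 := hpat i l h0 hle hl.1 hl.2
      constructor
      · intro h2
        by_contra h3
        have := h1.mpr (by omega)
        omega
      · intro h2
        by_contra h3
        have := h1.mp (by omega)
        omega
    have hpmem := p.perm_mem i h0 (by omega)
    have h1 := card_filter_perm_le m (a := m.perm i) (m.perm_mem i h0 hle).2
    have h2 : (((Finset.Icc 1 p.len)).filter (fun l => p.perm l ≤ p.perm i)).card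
        = p.perm i := card_filter_perm_le p hpmem.2
    rw [← hlen] at h2
    rw [hfe] at h1
    omega

/-! ### η is the identity for same-length occurrences -/

lemma eta_add {m p : MeshPattern} {η : ℕ → ℕ} (hη : IsOcc m p η) {i t : ℕ}
    (h1 : 1 ≤ i) (h2 : i + t ≤ m.len) : η i + t ≤ η (i + t) := by
  induction t with
  | zero => simp
  | succ s ih =>
    have hm := hη.mono (i+s) (i+s+1) (by omega) (by omega) (by omega)
    have := ih (by omega)
    show η i + (s + 1) ≤ η (i + s + 1)
    omega

lemma eta_id_of_len_eq {c p : MeshPattern} {η : ℕ → ℕ} (hη : IsOcc c p η)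
    (hlen : c.len = p.len) : ∀ i, 1 ≤ i → i ≤ c.len → η i = i := by
  intro i h1 h2
  have hge := eta_ge hη i h1 h2
  have hadd := eta_add hη (i := i) (t := c.len - i) h1 (by omega)
  have hlast := (hη.mem c.len (by omega) le_rfl).2
  have hsum : i + (c.len - i) = c.len := by omega
  rw [hsum] at hadd
  omega

/-- Same-length containments are exactly reshadings with smaller shading. -/
lemma eq_reshade_of_le_same_len {c p : MeshPattern} (h : c ≤ p)
    (hlen : c.len = p.len) (hL : 1 ≤ c.len) :
    ∃ (hsub : c.sh ⊆ p.sh), c = reshade p c.sh hsub := by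
  obtain ⟨η, hη⟩ := h
  have hid := eta_id_of_len_eq hη hlen
  have hperm : c.perm = p.perm := by
    apply perm_eq_of_orderIso hlen
    intro i j hi1 hi2 hj1 hj2
    have := hη.pattern i j hi1 hi2 hj1 hj2
    rwa [hid i hi1 hi2, hid j hj1 hj2] at this
  have hcol : ∀ i, i ≤ c.len → colExt c p η i = i := by
    intro i hi
    rcases Nat.eq_zero_or_pos i with h0 | h0
    · subst h0; rfl
    · have hne : i ≠ 0 := by omega
      simp only [colExt, hne, if_false, hi, if_true]
      exact hid i h0 hi
  have hcolS : ∀ i, i ≤ c.len → colExt c p η (i+1) = i + 1 := by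
    intro i hi
    rcases Nat.lt_or_ge c.len (i+1) with h1 | h1
    · have h2 : i = c.len := by omega
      rw [colExt_top (by omega)]
      omega
    · exact hcol (i+1) h1
  have hval : ∀ j, j ≤ c.len → valExt c p η j = j := by
    intro j hj
    rcases Nat.eq_zero_or_pos j with h0 | h0
    · subst h0; simp [valExt]
    · have hj0 : j ≠ 0 := by omega
      have hps := pos_spec (m := c) (v := j) h0 hj
      simp only [valExt, hj0, if_false, hj, if_true]
      rw [hid _ hps.2.1 hps.2.2, ← hperm, hps.1]
  have hvalS : ∀ j, j ≤ c.len → valExt c p η (j+1) = j + 1 := by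
    intro j hj
    rcases Nat.lt_or_ge c.len (j+1) with h1 | h1
    · have h2 : j = c.len := by omega
      rw [valExt_top (by omega)]
      omega
    · exact hval (j+1) h1
  have hsub : c.sh ⊆ p.sh := by
    intro x hx
    obtain ⟨hx1, hx2⟩ := c.sh_mem x hx
    have hreg : inRegion c p η x.1 x.2 x.1 x.2 := by
      refine ⟨?_, ?_, ?_, ?_⟩
      · rw [hcol x.1 hx1]
      · rw [hcolS x.1 hx1]; omega
      · rw [hval x.2 hx2]
      · rw [hvalS x.2 hx2]; omega
    have := hη.shaded x hx x.1 x.2 hreg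
    simpa using this
  exact ⟨hsub, ext' hlen hperm rfl⟩

/-! ### Finiteness -/

lemma finite_len_le (n : ℕ) : {c : MeshPattern | c.len ≤ n}.Finite := by
  classical
  rw [← Set.finite_coe_iff]
  let T := Fin (n+1) × (Fin (n+1) → Fin (n+1)) × (Fin (n+1) × Fin (n+1) → Bool)
  have hperm_le : ∀ (c : MeshPattern), c.len ≤ n → ∀ i : ℕ, c.perm i ≤ n := by
    intro c hc i
    rcases Nat.eq_zero_or_pos i with h0 | h0
    · rw [c.perm_zero i (Or.inl h0)]; omega
    rcases Nat.lt_or_ge c.len i with h1 | h1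
    · rw [c.perm_zero i (Or.inr h1)]; omega
    · have := (c.perm_mem i h0 h1).2; omega
  let F : {c : MeshPattern // c.len ≤ n} → T := fun c =>
    (⟨c.1.len, by omega⟩,
     fun i => ⟨c.1.perm i.val, by have := hperm_le c.1 c.2 i.val; omega⟩,
     fun q => decide ((q.1.val, q.2.val) ∈ c.1.sh))
  have hF : Function.Injective F := by
    intro c d hcd
    have e1 : c.1.len = d.1.len := congrArg (fun t : T => t.1.val) hcd
    have e2 : ∀ i : Fin (n+1), c.1.perm i.val = d.1.perm i.val := fun i =>
      congrArg (fun t : T => (t.2.1 i).val) hcd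
    have e3 : ∀ q : Fin (n+1) × Fin (n+1),
        decide ((q.1.val, q.2.val) ∈ c.1.sh) = decide ((q.1.val, q.2.val) ∈ d.1.sh) :=
      fun q => congrArg (fun t : T => t.2.2 q) hcd
    apply Subtype.ext
    apply ext' e1
    · funext i
      rcases Nat.lt_or_ge n i with h1 | h1
      · rw [c.1.perm_zero i (Or.inr (by omega)), d.1.perm_zero i (Or.inr (by omega))]
      · exact e2 ⟨i, by omega⟩
    · apply Finset.ext
      rintro ⟨a, b⟩
      rcases Nat.lt_or_ge n a with h1 | h1
      · constructor
        · intro h; have := (c.1.sh_mem _ h).1; omega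
        · intro h; have := (d.1.sh_mem _ h).1; omega
      rcases Nat.lt_or_ge n b with h2 | h2
      · constructor
        · intro h; have := (c.1.sh_mem _ h).2; omega
        · intro h; have := (d.1.sh_mem _ h).2; omega
      · have := e3 (⟨a, by omega⟩, ⟨b, by omega⟩)
        simpa using this
  exact Finite.of_injective F hF

end MeshPattern

namespace MeshPattern

lemma valExt_strict_mono {m p : MeshPattern} {η : ℕ → ℕ} (hη : IsOcc m p η)
    {i j : ℕ} (h : i < j) (hj : j ≤ m.len + 1) : valExt m p η i < valExt m p η j :=
  lt_of_lt_of_le (valExt_succ_lt hη (by omega)) (valExt_mono hη (by omega))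

lemma sh_card_le_of_occ {c p : MeshPattern} {η : ℕ → ℕ} (hη : IsOcc c p η) :
    c.sh.card ≤ p.sh.card := by
  classical
  apply Finset.card_le_card_of_injOn
    (fun q => (colExt c p η q.1, valExt c p η q.2))
  · intro q hq
    obtain ⟨h1, h2⟩ := c.sh_mem q hq
    exact hη.shaded q hq _ _
      ⟨le_rfl, colExt_succ_lt hη h1, le_rfl, valExt_succ_lt hη h2⟩
  · intro q hq r hr heq
    have h1 : colExt c p η q.1 = colExt c p η r.1 := congrArg Prod.fst heq
    have h2 : valExt c p η q.2 = valExt c p η r.2 := congrArg Prod.snd heq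
    obtain ⟨hq1, hq2⟩ := c.sh_mem q hq
    obtain ⟨hr1, hr2⟩ := c.sh_mem r hr
    have e1 : q.1 = r.1 := by
      by_contra hne
      rcases Nat.lt_or_ge q.1 r.1 with h | h
      · have := colExt_strict_mono hη h (by omega); omega
      · have := colExt_strict_mono hη (show r.1 < q.1 by omega) (by omega); omega
    have e2 : q.2 = r.2 := by
      by_contra hne
      rcases Nat.lt_or_ge q.2 r.2 with h | h
      · have := valExt_strict_mono hη h (by omega); omega
      · have := valExt_strict_mono hη (show r.2 < q.2 by omega) (by omega); omega
    exact Prod.ext e1 e2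

lemma dim_def (q : MeshPattern) : q.dim = q.len + q.sh.card := rfl

lemma dim_lt_of_lt {c q : MeshPattern} (hc : one0 ≤ c) (h : c ≤ q) (hne : c ≠ q) :
    c.dim < q.dim := by
  have hlc := len_pos_of_one0_le hc
  obtain ⟨η, hη⟩ := h
  have hll := len_le_of_occ hη hlc
  have hcard := sh_card_le_of_occ hη
  rcases Nat.lt_or_ge c.len q.len with hlt | hge
  · rw [dim_def, dim_def]; omega
  · have hlen : c.len = q.len := by omega
    obtain ⟨hsub, hcre⟩ := eq_reshade_of_le_same_len ⟨η, hη⟩ hlen hlc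
    have hshne : c.sh ≠ q.sh := by
      intro he
      apply hne
      rw [hcre]
      exact ext' rfl rfl he
    have hss : c.sh ⊂ q.sh := ⟨hsub, fun h2 => hshne (le_antisymm hsub h2)⟩
    have := Finset.card_lt_card hss
    rw [dim_def, dim_def]; omega

/-! ### Fuel stabilization and the recursion for `mu` -/

lemma muFuel_self {α : Type*} (r : α → α → Prop) (n : ℕ) (a : α) :
    muFuel r n a a = 1 := by
  cases n <;> simp [muFuel]

open Classical in
lemma muFuel_succ_of_ne {α : Type*} (r : α → α → Prop) {a b : α} (h : a ≠ b) (n : ℕ) :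
    muFuel r (n+1) a b =
      if r a b then -∑ᶠ c ∈ {c | r a c ∧ r c b ∧ c ≠ b}, muFuel r n a c else 0 := by
  simp [muFuel, h]

lemma muFuel_zero_of_ne {α : Type*} (r : α → α → Prop) {a b : α} (h : a ≠ b) :
    muFuel r 0 a b = 0 := by
  simp [muFuel, h]

lemma muFuel_stab : ∀ k N M : ℕ, k ≤ N → k ≤ M → ∀ q : MeshPattern, q.dim ≤ k →
    muFuel (· ≤ ·) N one0 q = muFuel (· ≤ ·) M one0 q := by
  intro k
  induction k using Nat.strong_induction_on with
  | _ k ih =>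
    intro N M hN hM q hq
    by_cases heq : one0 = q
    · subst heq; rw [muFuel_self, muFuel_self]
    by_cases hle : one0 ≤ q
    · have hlen := len_pos_of_one0_le hle
      have hdim : 1 ≤ q.dim := by rw [dim_def]; omega
      obtain ⟨N', rfl⟩ : ∃ N', N = N' + 1 := ⟨N - 1, by omega⟩
      obtain ⟨M', rfl⟩ : ∃ M', M = M' + 1 := ⟨M - 1, by omega⟩
      rw [muFuel_succ_of_ne _ heq, muFuel_succ_of_ne _ heq, if_pos hle, if_pos hle]
      congr 1
      apply finsum_mem_congr rfl
      intro c hc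
      obtain ⟨hc1, hc2, hc3⟩ := hc
      have hdlt : c.dim < q.dim := dim_lt_of_lt hc1 hc2 hc3
      exact ih (k-1) (by omega) N' M' (by omega) (by omega) c (by omega)
    · have hz : ∀ L, muFuel (· ≤ ·) L one0 q = 0 := by
        intro L
        cases L with
        | zero => simp [muFuel, heq]
        | succ L' => rw [muFuel_succ_of_ne _ heq, if_neg hle]
      rw [hz, hz]

lemma mu_self : mu one0 one0 = 1 := muFuel_self _ _ _

lemma mu_of_not_le {q : MeshPattern} (h : ¬ one0 ≤ q) (hne : one0 ≠ q) :
    mu one0 q = 0 := by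
  unfold mu
  rw [muFuel_succ_of_ne _ hne, if_neg h]

lemma mu_rec {q : MeshPattern} (hle : one0 ≤ q) (hne : one0 ≠ q) :
    mu one0 q = -∑ᶠ c ∈ {c | one0 ≤ c ∧ c ≤ q ∧ c ≠ q}, mu one0 c := by
  unfold mu
  rw [muFuel_succ_of_ne _ hne, if_pos hle]
  congr 1
  apply finsum_mem_congr rfl
  intro c hc
  obtain ⟨hc1, hc2, hc3⟩ := hc
  have hdlt : c.dim < q.dim := dim_lt_of_lt hc1 hc2 hc3
  exact muFuel_stab (c.dim + 1) q.dim (c.dim + 1) (by omega) le_rfl c (by omega)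

end MeshPattern

namespace MeshPattern

lemma powerset_mobius {X : Type*} [DecidableEq X] (S : Finset X) (g : Finset X → ℤ) :
    ∑ A ∈ S.powerset, (-1 : ℤ)^(S.card + A.card) * ∑ B ∈ A.powerset, g B = g S := by
  classical
  have hstep1 : ∀ A ∈ S.powerset,
      (-1 : ℤ)^(S.card + A.card) * ∑ B ∈ A.powerset, g B
      = ∑ B ∈ S.powerset, (if B ⊆ A then (-1 : ℤ)^(S.card + A.card) * g B else 0) := by
    intro A hA
    rw [Finset.mem_powerset] at hA
    rw [← Finset.sum_filter]
    have he : S.powerset.filter (fun B => B ⊆ A) = A.powerset := by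
      ext B
      simp only [Finset.mem_filter, Finset.mem_powerset]
      constructor
      · exact fun h => h.2
      · exact fun h => ⟨le_trans h hA, h⟩
    rw [he, Finset.mul_sum]
  rw [Finset.sum_congr rfl hstep1, Finset.sum_comm]
  have hstep2 : ∀ B ∈ S.powerset,
      (∑ A ∈ S.powerset, if B ⊆ A then (-1 : ℤ)^(S.card + A.card) * g B else 0)
      = if B = S then g B else 0 := by
    intro B hB
    rw [Finset.mem_powerset] at hB
    rw [← Finset.sum_filter]
    have hbij : ∑ A ∈ S.powerset.filter (fun A => B ⊆ A),
          (-1 : ℤ)^(S.card + A.card) * g B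
        = ∑ C ∈ (S \ B).powerset, (-1 : ℤ)^(S.card + (B.card + C.card)) * g B := by
      apply Finset.sum_nbij' (fun A => A \ B) (fun C => B ∪ C)
      · intro A hA
        simp only [Finset.mem_filter, Finset.mem_powerset] at hA
        simp only [Finset.mem_powerset]
        exact Finset.sdiff_subset_sdiff hA.1 le_rfl
      · intro C hC
        simp only [Finset.mem_powerset] at hC
        simp only [Finset.mem_filter, Finset.mem_powerset]
        constructor
        · apply Finset.union_subset hB
          exact le_trans hC (Finset.sdiff_subset)
        · exact Finset.subset_union_left
      · intro A hA
        simp only [Finset.mem_filter, Finset.mem_powerset] at hA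
        exact Finset.union_sdiff_of_subset hA.2
      · intro C hC
        simp only [Finset.mem_powerset] at hC
        apply Finset.union_sdiff_cancel_left
        have hd : Disjoint (S \ B) B := Finset.sdiff_disjoint
        exact (Finset.disjoint_of_subset_left hC hd).symm
      · intro A hA
        simp only [Finset.mem_filter, Finset.mem_powerset] at hA
        have hcard : A.card = B.card + (A \ B).card := by
          have h1 := Finset.card_sdiff_of_subset hA.2
          have h2 := Finset.card_le_card hA.2
          omega
        rw [← hcard]
    rw [hbij]
    have hfac : ∀ C ∈ (S \ B).powerset,
        (-1 : ℤ)^(S.card + (B.card + C.card)) * g B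
        = ((-1 : ℤ)^(S.card + B.card) * g B) * (-1 : ℤ)^C.card := by
      intro C _
      rw [← Nat.add_assoc, pow_add]
      ring
    rw [Finset.sum_congr rfl hfac, ← Finset.mul_sum,
      Finset.sum_powerset_neg_one_pow_card]
    by_cases hBS : B = S
    · subst hBS
      have h1 : B \ B = ∅ := by simp
      rw [if_pos h1, if_pos rfl, mul_one]
      have h2 : ((-1 : ℤ))^(B.card + B.card) = 1 := by
        rw [← two_mul, pow_mul]
        norm_num
      rw [h2, one_mul]
    · have h1 : S \ B ≠ ∅ := by
        intro h
        exact hBS (le_antisymm hB (by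
          intro x hx
          by_contra hxB
          have : x ∈ S \ B := Finset.mem_sdiff.mpr ⟨hx, hxB⟩
          simp [h] at this))
      rw [if_neg h1, if_neg hBS, mul_zero]
  rw [Finset.sum_congr rfl hstep2]
  rw [Finset.sum_ite_eq' S.powerset S g]
  simp

end MeshPattern

namespace MeshPattern

/-! ### Reshading with automatic intersection, and the shorter-pattern Finset -/

noncomputable def resht (p : MeshPattern) (B : Finset (ℕ × ℕ)) : MeshPattern :=
  reshade p (B ∩ p.sh) Finset.inter_subset_right

lemma resht_len (p : MeshPattern) (B : Finset (ℕ × ℕ)) : (resht p B).len = p.len := rfl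
lemma resht_perm (p : MeshPattern) (B : Finset (ℕ × ℕ)) : (resht p B).perm = p.perm := rfl
lemma resht_sh (p : MeshPattern) (B : Finset (ℕ × ℕ)) : (resht p B).sh = B ∩ p.sh := rfl

lemma resht_sh_of_subset {p : MeshPattern} {B : Finset (ℕ × ℕ)} (hB : B ⊆ p.sh) :
    (resht p B).sh = B := by
  rw [resht_sh]
  exact Finset.inter_eq_left.mpr hB

lemma resht_self (p : MeshPattern) : resht p p.sh = p :=
  ext' rfl rfl (Finset.inter_self _)

lemma le_resht_mono {c p : MeshPattern} {A B : Finset (ℕ × ℕ)} (h : A ∩ p.sh ⊆ B ∩ p.sh)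
    (hc : c ≤ resht p A) : c ≤ resht p B := by
  obtain ⟨η, hη⟩ := hc
  exact ⟨η, isOcc_reshade_mono _ _ h hη⟩

noncomputable def shorterFin (p : MeshPattern) : Finset MeshPattern :=
  (Set.Finite.subset (finite_len_le p.len)
    (fun c hc => le_of_lt hc.2.1 : {c : MeshPattern | 1 ≤ c.len ∧ c.len < p.len ∧ c ≤ p}
      ⊆ {c : MeshPattern | c.len ≤ p.len})).toFinset

lemma mem_shorterFin {p c : MeshPattern} :
    c ∈ shorterFin p ↔ 1 ≤ c.len ∧ c.len < p.len ∧ c ≤ p :=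
  Set.Finite.mem_toFinset _

/-! ### The master identity -/

open Classical in
lemma master (p : MeshPattern) (h2 : 2 ≤ p.len) {A : Finset (ℕ × ℕ)} (hA : A ⊆ p.sh) :
    ∑ B ∈ A.powerset, mu one0 (resht p B)
      = -∑ c ∈ shorterFin p, (if c ≤ resht p A then mu one0 c else 0) := by
  classical
  have hqsh : (resht p A).sh = A := resht_sh_of_subset hA
  have hql : (resht p A).len = p.len := rfl
  have hle : one0 ≤ resht p A := one0_le (by rw [hql]; omega)
  have hne : one0 ≠ resht p A := by
    intro h
    have h' := congrArg MeshPattern.len h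
    rw [one0_len, hql] at h'
    omega
  have hrec := mu_rec hle hne
  set Bfin : Finset MeshPattern := (A.powerset.erase A).image (fun B => resht p B)
    with hBfin
  set Cfin : Finset MeshPattern := (shorterFin p).filter (fun c => c ≤ resht p A)
    with hCfin
  have hset : {c : MeshPattern | one0 ≤ c ∧ c ≤ resht p A ∧ c ≠ resht p A}
      = ↑(Bfin ∪ Cfin) := by
    ext c
    simp only [Set.mem_setOf_eq, Finset.coe_union, Set.mem_union, Finset.mem_coe,
      hBfin, hCfin, Finset.mem_image, Finset.mem_filter, Finset.mem_erase,
      Finset.mem_powerset, mem_shorterFin]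
    constructor
    · rintro ⟨h1, hcq, h3⟩
      have hc1 : 1 ≤ c.len := len_pos_of_one0_le h1
      obtain ⟨η, hη⟩ := hcq
      have hcl : c.len ≤ p.len := by
        have := len_le_of_occ hη hc1
        rwa [hql] at this
      rcases Nat.lt_or_ge c.len p.len with hlt | hge
      · right
        exact ⟨⟨hc1, hlt, ⟨η, isOcc_reshade_to_p _ hη⟩⟩, ⟨η, hη⟩⟩
      · left
        have hlen : c.len = (resht p A).len := by rw [hql]; omega
        obtain ⟨hsub, hcre⟩ := eq_reshade_of_le_same_len ⟨η, hη⟩ hlen hc1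
        rw [hqsh] at hsub
        have hclen : c.len = p.len := by omega
        have hcperm : c.perm = p.perm := by rw [hcre]; rfl
        have hcsh : c = resht p c.sh := by
          refine ext' ?_ ?_ ?_
          · rw [resht_len]; exact hclen
          · rw [resht_perm]; exact hcperm
          · rw [resht_sh_of_subset (subset_trans hsub hA)]
        refine ⟨c.sh, ⟨?_, hsub⟩, hcsh.symm⟩
        intro hceq
        apply h3
        rw [hcsh, hceq]
    · rintro (⟨B, ⟨hBne, hBA⟩, rfl⟩ | ⟨⟨hc1, hc2, _⟩, hcq⟩)
      · have hBS : B ⊆ p.sh := subset_trans hBA hA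
        refine ⟨one0_le (by rw [resht_len]; omega), ?_, ?_⟩
        · exact reshade_le _ _ (Finset.inter_subset_inter hBA le_rfl)
        · intro h
          apply hBne
          have := congrArg MeshPattern.sh h
          rw [resht_sh_of_subset hBS, hqsh] at this
          exact this
      · refine ⟨one0_le hc1, hcq, ?_⟩
        intro h
        rw [h, hql] at hc2
        omega
  have hdisj : Disjoint Bfin Cfin := by
    rw [Finset.disjoint_left]
    intro c hcB hcC
    rw [hBfin, Finset.mem_image] at hcB
    rw [hCfin, Finset.mem_filter, mem_shorterFin] at hcC
    obtain ⟨B, _, rfl⟩ := hcB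
    have := hcC.1.2.1
    rw [resht_len] at this
    omega
  have hinj : ∀ B ∈ A.powerset.erase A, ∀ B' ∈ A.powerset.erase A,
      resht p B = resht p B' → B = B' := by
    intro B hB B' hB' h
    rw [Finset.mem_erase, Finset.mem_powerset] at hB hB'
    have := congrArg MeshPattern.sh h
    rw [resht_sh_of_subset (subset_trans hB.2 hA),
      resht_sh_of_subset (subset_trans hB'.2 hA)] at this
    exact this
  rw [hset, finsum_mem_coe_finset, Finset.sum_union hdisj] at hrec
  rw [hBfin, Finset.sum_image hinj] at hrec
  rw [hCfin, Finset.sum_filter] at hrec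
  have hsplit : ∑ B ∈ A.powerset, mu one0 (resht p B)
      = mu one0 (resht p A) + ∑ B ∈ A.powerset.erase A, mu one0 (resht p B) :=
    (Finset.add_sum_erase _ _ (Finset.mem_powerset_self A)).symm
  rw [hsplit]
  linarith [hrec]

/-! ### Nice is preserved by enlarging the shading; singleton boxes on the edge -/

lemma niceAt_of_le_sh {q r : MeshPattern} (hlen : q.len = r.len)
    (hperm : q.perm = r.perm) (hsh : q.sh ⊆ r.sh) {a b : ℕ}
    (h : NiceAt q a b) : NiceAt r a b := by
  obtain ⟨i₁, i₂, j₁, j₂, h1, h2, h3, h4, h5, h6, hspan, hfull, hpt⟩ := h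
  refine ⟨i₁, i₂, j₁, j₂, h1, h2, by omega, h4, h5, by omega, by omega, ?_, ?_⟩
  · intro a' b' ha1 ha2 hb1 hb2
    exact hsh (hfull a' b' ha1 ha2 hb1 hb2)
  · intro y hy1 hy2 hy3 hy4
    rw [← hperm]
    exact hpt y hy1 (by omega) hy3 hy4

lemma niceAt_singleton {q : MeshPattern} {i j : ℕ} (hmem : (i, j) ∈ q.sh)
    (hedge : i = 0 ∨ i = q.len ∨ j = 0 ∨ j = q.len) : NiceAt q i j := by
  obtain ⟨h1, h2⟩ := q.sh_mem (i, j) hmem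
  refine ⟨i, i, j, j, le_rfl, le_rfl, h1, le_rfl, le_rfl, h2, hedge, ?_, ?_⟩
  · intro a b ha1 ha2 hb1 hb2
    have ha : a = i := by omega
    have hb : b = j := by omega
    rw [ha, hb]; exact hmem
  · intro y _ _ h3 h4 hcon
    omega

/-! ### Theorem B : nonzero Möbius value forces Nice -/

theorem nice_of_mu_ne_zero : ∀ (p : MeshPattern), mu one0 p ≠ 0 → Nice p := by
  classical
  have H : ∀ n : ℕ, ∀ p : MeshPattern, p.len = n → mu one0 p ≠ 0 → Nice p := by
    intro n
    induction n using Nat.strong_induction_on with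
    | _ n ih =>
      intro p hn hmu
      by_cases hsmall : p.len ≤ 1
      · intro i j hij
        obtain ⟨h1, h2⟩ := p.sh_mem (i, j) hij
        exact niceAt_singleton hij (by omega)
      push_neg at hsmall
      by_contra hNice
      unfold Nice at hNice
      push_neg at hNice
      obtain ⟨b1, b2, hβS, hβ⟩ := hNice
      apply hmu
      -- inversion + master
      have hfin : mu one0 p = ∑ A ∈ p.sh.powerset,
          (-1 : ℤ)^(p.sh.card + A.card) *
            -(∑ c ∈ shorterFin p, if c ≤ resht p A then mu one0 c else 0) := by
        conv_lhs => rw [← resht_self p]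
        rw [← powerset_mobius p.sh (fun B => mu one0 (resht p B))]
        apply Finset.sum_congr rfl
        intro A hA
        rw [master p (by omega) (Finset.mem_powerset.mp hA)]
      have hfin2 : mu one0 p = -∑ c ∈ shorterFin p, ∑ A ∈ p.sh.powerset,
          (-1 : ℤ)^(p.sh.card + A.card) *
            (if c ≤ resht p A then mu one0 c else 0) := by
        rw [hfin]
        simp only [mul_neg]
        rw [Finset.sum_neg_distrib]
        congr 1
        rw [Finset.sum_comm]
        apply Finset.sum_congr rfl
        intro A _
        rw [Finset.mul_sum]
      have hczero : ∀ c ∈ shorterFin p, (∑ A ∈ p.sh.powerset,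
          (-1 : ℤ)^(p.sh.card + A.card) *
            (if c ≤ resht p A then mu one0 c else 0)) = 0 := by
        intro c hc
        by_cases hc0 : mu one0 c = 0
        · apply Finset.sum_eq_zero
          intro A _
          rw [hc0]
          simp
        obtain ⟨hc1, hc2, hc3⟩ := mem_shorterFin.mp hc
        have hNc : Nice c := ih c.len (by omega) c rfl hc0
        have hkey : ∀ A, A ⊆ p.sh.erase (b1, b2) →
            ((c ≤ resht p (insert (b1, b2) A)) ↔ (c ≤ resht p A)) := by
          intro A hAT
          have hAS : A ⊆ p.sh := subset_trans hAT (Finset.erase_subset _ _)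
          constructor
          · rintro ⟨η, hη⟩
            by_cases hreg : ∃ i j, (i, j) ∈ c.sh ∧ inRegion c p η i j b1 b2
            · exfalso
              obtain ⟨i, j, hij, hreg'⟩ := hreg
              have hNij : NiceAt c i j := hNc i j hij
              have htr : NiceAt (resht p (insert (b1, b2) A)) b1 b2 :=
                niceAt_transfer hη hij hNij hreg'
              refine hβ (niceAt_of_le_sh (q := resht p (insert (b1, b2) A)) (r := p)
                rfl rfl ?_ htr)
              rw [resht_sh]
              exact Finset.inter_subset_right
            · push_neg at hreg
              refine ⟨η, isOcc_reshade_avoid (β := (b1, b2))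
                Finset.inter_subset_right Finset.inter_subset_right ?_ hη ?_⟩
              · intro x hx
                rcases Finset.mem_inter.mp hx with ⟨hx1, hx2⟩
                rcases Finset.mem_insert.mp hx1 with h | h
                · exact Finset.mem_insert.mpr (Or.inl h)
                · exact Finset.mem_insert.mpr
                    (Or.inr (Finset.mem_inter.mpr ⟨h, hx2⟩))
              · intro i j hij
                exact hreg i j hij
          · intro h
            exact le_resht_mono
              (Finset.inter_subset_inter (Finset.subset_insert _ A) le_rfl) h
        have hβT : (b1, b2) ∉ p.sh.erase (b1, b2) := Finset.notMem_erase _ _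
        rw [show p.sh = insert (b1, b2) (p.sh.erase (b1, b2)) from
          (Finset.insert_erase hβS).symm]
        rw [Finset.sum_powerset_insert hβT]
        rw [← Finset.sum_add_distrib]
        apply Finset.sum_eq_zero
        intro A hA
        have hAT : A ⊆ p.sh.erase (b1, b2) := Finset.mem_powerset.mp hA
        have hβA : (b1, b2) ∉ A := fun h => hβT (hAT h)
        have hcards : (insert (b1, b2) A).card = A.card + 1 :=
          Finset.card_insert_of_notMem hβA
        have hite : (if c ≤ resht p (insert (b1, b2) A) then mu one0 c else 0)
            = (if c ≤ resht p A then mu one0 c else 0) := by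
          simp only [hkey A hAT]
        rw [hite, hcards]
        have hexp : (insert (b1, b2) (p.sh.erase (b1, b2))).card + (A.card + 1)
            = ((insert (b1, b2) (p.sh.erase (b1, b2))).card + A.card) + 1 := by omega
        rw [hexp, pow_succ]
        ring
      rw [hfin2, Finset.sum_congr rfl hczero]
      simp
  exact fun p hmu => H p.len p rfl hmu

end MeshPattern

namespace MeshPattern

section TotalCount

variable (n : ℕ)

def decPerm (σ : Equiv.Perm (Fin n)) : ℕ → ℕ := fun i =>
  if h : 1 ≤ i ∧ i ≤ n then ((σ ⟨i - 1, by omega⟩ : Fin n) : ℕ) + 1 else 0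

lemma decPerm_eq {σ : Equiv.Perm (Fin n)} {i : ℕ} (h1 : 1 ≤ i) (h2 : i ≤ n) :
    decPerm n σ i = ((σ ⟨i - 1, by omega⟩ : Fin n) : ℕ) + 1 := dif_pos ⟨h1, h2⟩

lemma decPerm_zero {σ : Equiv.Perm (Fin n)} {i : ℕ} (h : i = 0 ∨ n < i) :
    decPerm n σ i = 0 := dif_neg (by omega)

/-- Encoding of length-`n` mesh patterns by a permutation and a shading. -/
noncomputable def decodeP (x : Equiv.Perm (Fin n) × Finset (Fin (n+1) × Fin (n+1))) :
    MeshPattern where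
  len := n
  perm := decPerm n x.1
  sh := x.2.image (fun q => ((q.1 : ℕ), (q.2 : ℕ)))
  perm_mem := by
    intro i h1 h2
    rw [decPerm_eq n h1 h2]
    have := (x.1 ⟨i - 1, by omega⟩).is_lt
    omega
  perm_zero := by
    intro i h
    exact decPerm_zero n h
  perm_inj := by
    intro i j h1 h2 h3 h4 h
    rw [decPerm_eq n h1 h2, decPerm_eq n h3 h4] at h
    have h5 : x.1 ⟨i - 1, by omega⟩ = x.1 ⟨j - 1, by omega⟩ := by
      apply Fin.ext
      omega
    have h6 := congrArg Fin.val (x.1.injective h5)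
    simp only [] at h6
    omega
  perm_surj := by
    intro v h1 h2
    have hlt := (x.1.symm ⟨v - 1, by omega⟩).is_lt
    refine ⟨(x.1.symm ⟨v - 1, by omega⟩).val + 1, by omega, by omega, ?_⟩
    rw [decPerm_eq n (by omega) (by omega)]
    have h3 : x.1 (⟨(x.1.symm ⟨v - 1, by omega⟩).val + 1 - 1, by omega⟩ : Fin n)
        = (⟨v - 1, by omega⟩ : Fin n) := by
      have h4 : (⟨(x.1.symm ⟨v - 1, by omega⟩).val + 1 - 1, by omega⟩ : Fin n)
          = x.1.symm ⟨v - 1, by omega⟩ := Fin.ext (by simp)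
      rw [h4, Equiv.apply_symm_apply]
    rw [h3]
    show v - 1 + 1 = v
    omega
  sh_mem := by
    intro q hq
    rw [Finset.mem_image] at hq
    obtain ⟨r, _, rfl⟩ := hq
    exact ⟨by have := r.1.is_lt; omega, by have := r.2.is_lt; omega⟩

lemma decodeP_len (x) : (decodeP n x).len = n := rfl
lemma decodeP_perm (x) : (decodeP n x).perm = decPerm n x.1 := rfl
lemma decodeP_sh (x) : (decodeP n x).sh = x.2.image (fun q => ((q.1 : ℕ), (q.2 : ℕ))) := rfl

lemma decodeP_inj : Function.Injective (decodeP n) := by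
  intro x y h
  have hperm := congrArg MeshPattern.perm h
  have hsh := congrArg MeshPattern.sh h
  rw [decodeP_perm, decodeP_perm] at hperm
  rw [decodeP_sh, decodeP_sh] at hsh
  have h1 : x.1 = y.1 := by
    apply Equiv.ext
    intro i
    have hlt := i.is_lt
    have h2 := congrFun hperm (i.val + 1)
    rw [decPerm_eq n (σ := x.1) (by omega) (by omega),
      decPerm_eq n (σ := y.1) (by omega) (by omega)] at h2
    have h3 : (⟨i.val + 1 - 1, by omega⟩ : Fin n) = i := Fin.ext (by simp)
    rw [h3] at h2
    exact Fin.ext (by omega)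
  have h2 : x.2 = y.2 := by
    have hfi : Function.Injective
        (fun q : Fin (n+1) × Fin (n+1) => ((q.1 : ℕ), (q.2 : ℕ))) := by
      intro a b hab
      have h1' := congrArg Prod.fst hab
      have h2' := congrArg Prod.snd hab
      simp only [] at h1' h2'
      exact Prod.ext (Fin.ext h1') (Fin.ext h2')
    exact Finset.image_injective hfi hsh
  exact Prod.ext h1 h2

lemma decodeP_surj {p : MeshPattern} (hp : p.len = n) : ∃ x, decodeP n x = p := by
  classical
  subst hp
  have hσf : ∀ i : Fin p.len, p.perm (i.val + 1) - 1 < p.len := by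
    intro i
    have := p.perm_mem (i.val + 1) (by omega) (by have := i.is_lt; omega)
    omega
  have hinj : Function.Injective (fun i : Fin p.len => (⟨p.perm (i.val + 1) - 1, hσf i⟩ : Fin p.len)) := by
    intro i j h
    have h1 := congrArg Fin.val h
    simp only [] at h1
    have hm1 := p.perm_mem (i.val + 1) (by omega) (by have := i.is_lt; omega)
    have hm2 := p.perm_mem (j.val + 1) (by omega) (by have := j.is_lt; omega)
    have := p.perm_inj (i.val + 1) (j.val + 1) (by omega)
      (by have := i.is_lt; omega) (by omega) (by have := j.is_lt; omega) (by omega)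
    apply Fin.ext
    omega
  have hbij := Finite.injective_iff_bijective.mp hinj
  refine ⟨(Equiv.ofBijective _ hbij,
    p.sh.attach.image (fun q => (⟨q.1.1, by have := p.sh_mem q.1 q.2; omega⟩,
      ⟨q.1.2, by have := p.sh_mem q.1 q.2; omega⟩))), ?_⟩
  refine ext' rfl ?_ ?_
  · funext i
    rw [decodeP_perm]
    by_cases h : 1 ≤ i ∧ i ≤ p.len
    · rw [decPerm_eq p.len h.1 h.2]
      have hval : (((Equiv.ofBijective _ hbij) (⟨i - 1, by omega⟩ : Fin p.len)) : ℕ)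
          = p.perm (i - 1 + 1) - 1 := rfl
      rw [hval]
      have hi : i - 1 + 1 = i := by omega
      rw [hi]
      have := p.perm_mem i h.1 h.2
      omega
    · rw [decPerm_zero p.len (by omega), p.perm_zero i (by omega)]
  · rw [decodeP_sh]
    rw [Finset.image_image]
    ext q
    constructor
    · intro hq
      rw [Finset.mem_image] at hq
      obtain ⟨a, _, rfl⟩ := hq
      exact a.2
    · intro hq
      rw [Finset.mem_image]
      exact ⟨⟨q, hq⟩, Finset.mem_attach _ _, rfl⟩

lemma ncard_len_eq : {p : MeshPattern | p.len = n}.ncard = Tcount n := by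
  classical
  have hrange : Set.range (decodeP n) = {p : MeshPattern | p.len = n} := by
    ext p
    constructor
    · rintro ⟨x, rfl⟩
      exact rfl
    · intro hp
      exact decodeP_surj n hp
  rw [← hrange]
  have h1 : (Set.range (decodeP n)).ncard = Nat.card
      (Equiv.Perm (Fin n) × Finset (Fin (n+1) × Fin (n+1))) := by
    rw [← Nat.card_coe_set_eq]
    exact Nat.card_range_of_injective (decodeP_inj n)
  rw [h1, Nat.card_eq_fintype_card, Fintype.card_prod, Fintype.card_perm,
    Fintype.card_fin, Fintype.card_finset, Fintype.card_prod, Fintype.card_fin]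
  unfold Tcount
  congr 1
  congr 1
  rw [sq]

end TotalCount

end MeshPattern

namespace MeshPattern

/-! ### Counting Nice patterns via staircase functions -/

def GoodRect (p : MeshPattern) (i₁ i₂ j₁ j₂ : ℕ) : Prop :=
  i₂ ≤ p.len ∧ j₂ ≤ p.len ∧
    (∀ a b, i₁ ≤ a → a ≤ i₂ → j₁ ≤ b → b ≤ j₂ → (a, b) ∈ p.sh) ∧
    (∀ y, 1 ≤ y → y ≤ p.len → i₁ < y → y ≤ i₂ → ¬(j₁ < p.perm y ∧ p.perm y ≤ j₂))

open Classical in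
noncomputable def fL (p : MeshPattern) (b : ℕ) : ℕ :=
  (Finset.range (p.len + 1)).sup fun i₂ =>
    if ∃ j₁ j₂, j₁ ≤ b ∧ b ≤ j₂ ∧ GoodRect p 0 i₂ j₁ j₂ then i₂ + 1 else 0

open Classical in
noncomputable def fR (p : MeshPattern) (b : ℕ) : ℕ :=
  (Finset.range (p.len + 1)).sup fun i₁ =>
    if ∃ j₁ j₂, j₁ ≤ b ∧ b ≤ j₂ ∧ GoodRect p i₁ p.len j₁ j₂ then p.len + 1 - i₁ else 0

open Classical in
noncomputable def fB (p : MeshPattern) (a : ℕ) : ℕ :=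
  (Finset.range (p.len + 1)).sup fun j₂ =>
    if ∃ i₁ i₂, i₁ ≤ a ∧ a ≤ i₂ ∧ GoodRect p i₁ i₂ 0 j₂ then j₂ + 1 else 0

open Classical in
noncomputable def fT (p : MeshPattern) (a : ℕ) : ℕ :=
  (Finset.range (p.len + 1)).sup fun j₁ =>
    if ∃ i₁ i₂, i₁ ≤ a ∧ a ≤ i₂ ∧ GoodRect p i₁ i₂ j₁ p.len then p.len + 1 - j₁ else 0

lemma fL_le (p : MeshPattern) (b : ℕ) : fL p b ≤ p.len + 1 := by
  apply Finset.sup_le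
  intro i hi
  rw [Finset.mem_range] at hi
  split <;> omega

lemma fR_le (p : MeshPattern) (b : ℕ) : fR p b ≤ p.len + 1 := by
  apply Finset.sup_le
  intro i hi
  split <;> omega

lemma fB_le (p : MeshPattern) (a : ℕ) : fB p a ≤ p.len + 1 := by
  apply Finset.sup_le
  intro i hi
  rw [Finset.mem_range] at hi
  split <;> omega

lemma fT_le (p : MeshPattern) (a : ℕ) : fT p a ≤ p.len + 1 := by
  apply Finset.sup_le
  intro i hi
  split <;> omega

/-- For Nice patterns the shading is recovered by the four staircase functions. -/
lemma sh_decode {p : MeshPattern} (hN : Nice p) (a b : ℕ) :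
    (a, b) ∈ p.sh ↔ (a ≤ p.len ∧ b ≤ p.len ∧ (a < fL p b ∨ p.len + 1 - a ≤ fR p b ∨
      b < fB p a ∨ p.len + 1 - b ≤ fT p a)) := by
  classical
  constructor
  · intro hab
    obtain ⟨ha, hb⟩ := p.sh_mem (a, b) hab
    refine ⟨ha, hb, ?_⟩
    obtain ⟨i₁, i₂, j₁, j₂, h1, h2, h3, h4, h5, h6, hspan, hfull, hpt⟩ := hN a b hab
    rcases hspan with hsp | hsp | hsp | hsp
    · left
      have hle : i₂ + 1 ≤ fL p b := by
        have hmem : i₂ ∈ Finset.range (p.len + 1) := Finset.mem_range.mpr (by omega)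
        have := Finset.le_sup (f := fun i₂ =>
          if ∃ j₁ j₂, j₁ ≤ b ∧ b ≤ j₂ ∧ GoodRect p 0 i₂ j₁ j₂ then i₂ + 1 else 0) hmem
        rw [if_pos ⟨j₁, j₂, h4, h5, h3, h6,
          fun a' b' u1 u2 u3 u4 => hfull a' b' (by omega) u2 u3 u4,
          fun y u1 u2 u3 u4 => hpt y u1 u2 (by omega) u4⟩] at this
        exact this
      omega
    · right; left
      have hle : p.len + 1 - i₁ ≤ fR p b := by
        have hmem : i₁ ∈ Finset.range (p.len + 1) := Finset.mem_range.mpr (by omega)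
        have := Finset.le_sup (f := fun i₁ =>
          if ∃ j₁ j₂, j₁ ≤ b ∧ b ≤ j₂ ∧ GoodRect p i₁ p.len j₁ j₂ then p.len + 1 - i₁
            else 0) hmem
        rw [if_pos ⟨j₁, j₂, h4, h5, le_rfl, h6,
          fun a' b' u1 u2 u3 u4 => hfull a' b' u1 (by omega) u3 u4,
          fun y u1 u2 u3 u4 => hpt y u1 u2 u3 (by omega)⟩] at this
        exact this
      omega
    · right; right; left
      have hle : j₂ + 1 ≤ fB p a := by
        have hmem : j₂ ∈ Finset.range (p.len + 1) := Finset.mem_range.mpr (by omega)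
        have := Finset.le_sup (f := fun j₂ =>
          if ∃ i₁ i₂, i₁ ≤ a ∧ a ≤ i₂ ∧ GoodRect p i₁ i₂ 0 j₂ then j₂ + 1 else 0) hmem
        rw [if_pos ⟨i₁, i₂, h1, h2, h3, h6,
          fun a' b' u1 u2 u3 u4 => hfull a' b' u1 u2 (by omega) u4,
          fun y u1 u2 u3 u4 hw => hpt y u1 u2 u3 u4 ⟨by omega, hw.2⟩⟩] at this
        exact this
      omega
    · right; right; right
      have hle : p.len + 1 - j₁ ≤ fT p a := by
        have hmem : j₁ ∈ Finset.range (p.len + 1) := Finset.mem_range.mpr (by omega)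
        have := Finset.le_sup (f := fun j₁ =>
          if ∃ i₁ i₂, i₁ ≤ a ∧ a ≤ i₂ ∧ GoodRect p i₁ i₂ j₁ p.len then p.len + 1 - j₁
            else 0) hmem
        rw [if_pos ⟨i₁, i₂, h1, h2, h3, le_rfl,
          fun a' b' u1 u2 u3 u4 => hfull a' b' u1 u2 u3 (by omega),
          fun y u1 u2 u3 u4 hw => hpt y u1 u2 u3 u4
            ⟨hw.1, by have := p.perm_mem y u1 u2; omega⟩⟩] at this
        exact this
      omega
  · rintro ⟨ha, hb, hcase | hcase | hcase | hcase⟩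
    · obtain ⟨i₂, _, hgt⟩ := Finset.lt_sup_iff.mp hcase
      by_cases hok : ∃ j₁ j₂, j₁ ≤ b ∧ b ≤ j₂ ∧ GoodRect p 0 i₂ j₁ j₂
      · obtain ⟨j₁, j₂, hj1, hj2, _, _, hfull, _⟩ := hok
        rw [if_pos (by exact ⟨j₁, j₂, hj1, hj2, by assumption, by assumption,
          hfull, by assumption⟩)] at hgt
        exact hfull a b (by omega) (by omega) hj1 hj2
      · rw [if_neg hok] at hgt; omega
    · have hcase' : p.len - a < fR p b := by omega
      obtain ⟨i₁, _, hgt⟩ := Finset.lt_sup_iff.mp hcase'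
      by_cases hok : ∃ j₁ j₂, j₁ ≤ b ∧ b ≤ j₂ ∧ GoodRect p i₁ p.len j₁ j₂
      · obtain ⟨j₁, j₂, hj1, hj2, _, _, hfull, _⟩ := hok
        rw [if_pos (by exact ⟨j₁, j₂, hj1, hj2, by assumption, by assumption,
          hfull, by assumption⟩)] at hgt
        exact hfull a b (by omega) (by omega) hj1 hj2
      · rw [if_neg hok] at hgt; omega
    · obtain ⟨j₂, _, hgt⟩ := Finset.lt_sup_iff.mp hcase
      by_cases hok : ∃ i₁ i₂, i₁ ≤ a ∧ a ≤ i₂ ∧ GoodRect p i₁ i₂ 0 j₂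
      · obtain ⟨i₁, i₂, hi1, hi2, _, _, hfull, _⟩ := hok
        rw [if_pos (by exact ⟨i₁, i₂, hi1, hi2, by assumption, by assumption,
          hfull, by assumption⟩)] at hgt
        exact hfull a b hi1 hi2 (by omega) (by omega)
      · rw [if_neg hok] at hgt; omega
    · have hcase' : p.len - b < fT p a := by omega
      obtain ⟨j₁, _, hgt⟩ := Finset.lt_sup_iff.mp hcase'
      by_cases hok : ∃ i₁ i₂, i₁ ≤ a ∧ a ≤ i₂ ∧ GoodRect p i₁ i₂ j₁ p.len
      · obtain ⟨i₁, i₂, hi1, hi2, _, _, hfull, _⟩ := hok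
        rw [if_pos (by exact ⟨i₁, i₂, hi1, hi2, by assumption, by assumption,
          hfull, by assumption⟩)] at hgt
        exact hfull a b hi1 hi2 (by omega) (by omega)
      · rw [if_neg hok] at hgt; omega

/-! ### The bad set is small -/

noncomputable def encodeBad (n : ℕ) (p : MeshPattern) :
    (Fin n → Fin (n+1)) × (Fin (n+1) → Fin (n+2)) × (Fin (n+1) → Fin (n+2)) ×
      (Fin (n+1) → Fin (n+2)) × (Fin (n+1) → Fin (n+2)) :=
  (fun i => ⟨min (p.perm (i.val + 1)) n, by omega⟩,
   fun b => ⟨min (fL p b.val) (n+1), by omega⟩,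
   fun b => ⟨min (fR p b.val) (n+1), by omega⟩,
   fun a => ⟨min (fB p a.val) (n+1), by omega⟩,
   fun a => ⟨min (fT p a.val) (n+1), by omega⟩)

lemma bad_ncard_le (n : ℕ) :
    {p : MeshPattern | p.len = n ∧ mu one0 p ≠ 0}.ncard
      ≤ (n+1)^n * ((n+2)^(n+1))^4 := by
  classical
  set s := {p : MeshPattern | p.len = n ∧ mu one0 p ≠ 0} with hs
  have hinj : Set.InjOn (encodeBad n) s := by
    intro p hp q hq hpq
    obtain ⟨hpl, hpmu⟩ := hp
    obtain ⟨hql, hqmu⟩ := hq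
    have hNp : Nice p := nice_of_mu_ne_zero p hpmu
    have hNq : Nice q := nice_of_mu_ne_zero q hqmu
    have e1 := congrArg Prod.fst hpq
    have e2 := congrArg (fun t => t.2.1) hpq
    have e3 := congrArg (fun t => t.2.2.1) hpq
    have e4 := congrArg (fun t => t.2.2.2.1) hpq
    have e5 := congrArg (fun t => t.2.2.2.2) hpq
    have hperm : p.perm = q.perm := by
      funext i
      by_cases h : 1 ≤ i ∧ i ≤ n
      · have := congrArg Fin.val (congrFun e1 ⟨i - 1, by omega⟩)
        simp only [encodeBad] at this
        have hi : i - 1 + 1 = i := by omega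
        rw [hi] at this
        have hp1 := p.perm_mem i h.1 (by omega)
        have hq1 := q.perm_mem i h.1 (by omega)
        rw [min_eq_left (by omega), min_eq_left (by omega)] at this
        exact this
      · rw [p.perm_zero i (by omega), q.perm_zero i (by omega)]
    have hfL : ∀ b : ℕ, b ≤ n → fL p b = fL q b := by
      intro b hbn
      have := congrArg Fin.val (congrFun e2 ⟨b, by omega⟩)
      simp only [encodeBad] at this
      have h1 := fL_le p b
      have h2 := fL_le q b
      rw [hpl] at h1; rw [hql] at h2
      rw [min_eq_left (by omega), min_eq_left (by omega)] at this
      exact this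
    have hfR : ∀ b : ℕ, b ≤ n → fR p b = fR q b := by
      intro b hbn
      have := congrArg Fin.val (congrFun e3 ⟨b, by omega⟩)
      simp only [encodeBad] at this
      have h1 := fR_le p b
      have h2 := fR_le q b
      rw [hpl] at h1; rw [hql] at h2
      rw [min_eq_left (by omega), min_eq_left (by omega)] at this
      exact this
    have hfB : ∀ a : ℕ, a ≤ n → fB p a = fB q a := by
      intro a han
      have := congrArg Fin.val (congrFun e4 ⟨a, by omega⟩)
      simp only [encodeBad] at this
      have h1 := fB_le p a
      have h2 := fB_le q a
      rw [hpl] at h1; rw [hql] at h2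
      rw [min_eq_left (by omega), min_eq_left (by omega)] at this
      exact this
    have hfT : ∀ a : ℕ, a ≤ n → fT p a = fT q a := by
      intro a han
      have := congrArg Fin.val (congrFun e5 ⟨a, by omega⟩)
      simp only [encodeBad] at this
      have h1 := fT_le p a
      have h2 := fT_le q a
      rw [hpl] at h1; rw [hql] at h2
      rw [min_eq_left (by omega), min_eq_left (by omega)] at this
      exact this
    refine ext' (by omega) hperm ?_
    ext x
    rcases x with ⟨a, b⟩
    by_cases hab : a ≤ n ∧ b ≤ n
    · rw [sh_decode hNp, sh_decode hNq, hpl, hql,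
        hfL b hab.2, hfR b hab.2, hfB a hab.1, hfT a hab.1]
    · constructor
      · intro h
        have := p.sh_mem _ h
        rw [hpl] at this
        exact absurd ⟨this.1, this.2⟩ hab
      · intro h
        have := q.sh_mem _ h
        rw [hql] at this
        exact absurd ⟨this.1, this.2⟩ hab
  calc s.ncard = (encodeBad n '' s).ncard := (Set.ncard_image_of_injOn hinj).symm
    _ ≤ (Set.univ : Set ((Fin n → Fin (n+1)) × (Fin (n+1) → Fin (n+2)) ×
          (Fin (n+1) → Fin (n+2)) × (Fin (n+1) → Fin (n+2)) ×
          (Fin (n+1) → Fin (n+2)))).ncard :=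
        Set.ncard_le_ncard (Set.subset_univ _) Set.finite_univ
    _ = (n+1)^n * ((n+2)^(n+1))^4 := by
        rw [Set.ncard_univ, Nat.card_eq_fintype_card]
        simp only [Fintype.card_prod, Fintype.card_fun, Fintype.card_fin]
        ring

end MeshPattern


namespace MeshPattern

/-- The number of mesh patterns of length `n` with `μ(1^∅, p) = 0`. -/
noncomputable def Zcount (n : ℕ) : ℕ :=
  {p : MeshPattern | p.len = n ∧ mu one0 p = 0}.ncard

/-- The proportion of mesh patterns `p` of length `n` with `μ(1^∅, p) = 0` tends to `1`
as `n` tends to infinity. -/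
theorem proportion_mu_zero_tendsto_one :
    Filter.Tendsto (fun n => (Zcount n : ℝ) / (Tcount n : ℝ)) Filter.atTop (nhds 1) := by
  classical
  -- the bad set and its size
  set bad : ℕ → ℕ := fun n => {p : MeshPattern | p.len = n ∧ mu one0 p ≠ 0}.ncard
    with hbad
  have hfin : ∀ n : ℕ, {p : MeshPattern | p.len = n}.Finite := fun n =>
    Set.Finite.subset (finite_len_le n) (fun c hc => le_of_eq hc)
  have hsub : ∀ n : ℕ, {p : MeshPattern | p.len = n ∧ mu one0 p ≠ 0}
      ⊆ {p : MeshPattern | p.len = n} := fun n p hp => hp.1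
  have hbadle : ∀ n : ℕ, bad n ≤ Tcount n := by
    intro n
    rw [hbad, ← ncard_len_eq n]
    exact Set.ncard_le_ncard (hsub n) (hfin n)
  have hZ : ∀ n : ℕ, Zcount n = Tcount n - bad n := by
    intro n
    have hdiff : {p : MeshPattern | p.len = n ∧ mu one0 p = 0}
        = {p : MeshPattern | p.len = n} \ {p : MeshPattern | p.len = n ∧ mu one0 p ≠ 0} := by
      ext p
      simp only [Set.mem_setOf_eq, Set.mem_diff]
      constructor
      · rintro ⟨h1, h2⟩
        exact ⟨h1, fun h => h.2 h2⟩
      · rintro ⟨h1, h2⟩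
        refine ⟨h1, ?_⟩
        by_contra h
        exact h2 ⟨h1, h⟩
    unfold Zcount
    rw [hdiff, Set.ncard_diff (hsub n) ((hfin n).subset (hsub n)), ncard_len_eq n]
  have hTpos : ∀ n : ℕ, (0 : ℝ) < (Tcount n : ℝ) := by
    intro n
    have : 0 < Tcount n := by
      unfold Tcount
      positivity
    exact_mod_cast this
  -- ratio identity
  have hratio : ∀ n : ℕ, (Zcount n : ℝ) / (Tcount n : ℝ)
      = 1 - (bad n : ℝ) / (Tcount n : ℝ) := by
    intro n
    have hT0 : (Tcount n : ℝ) ≠ 0 := ne_of_gt (hTpos n)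
    rw [hZ n, Nat.cast_sub (hbadle n), sub_div, div_self hT0]
  -- bad / T tends to 0
  have hbadB : ∀ n : ℕ, (bad n : ℝ) ≤ ((n : ℝ) + 2)^(5 * (n + 1)) := by
    intro n
    have h1 : bad n ≤ (n+2)^(5*(n+1)) := by
      calc bad n ≤ (n+1)^n * ((n+2)^(n+1))^4 := bad_ncard_le n
        _ ≤ (n+2)^(n+1) * ((n+2)^(n+1))^4 := by
            apply Nat.mul_le_mul_right
            calc (n+1)^n ≤ (n+2)^n := Nat.pow_le_pow_left (by omega) n
              _ ≤ (n+2)^(n+1) := Nat.pow_le_pow_right (by omega) (by omega)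
        _ = (n+2)^(5*(n+1)) := by
            rw [← pow_mul, ← pow_add]
            congr 1
            ring
    calc (bad n : ℝ) ≤ ((n+2)^(5*(n+1)) : ℕ) := by exact_mod_cast h1
      _ = ((n : ℝ) + 2)^(5 * (n + 1)) := by push_cast; ring_nf
  have hTge : ∀ n : ℕ, (2 : ℝ)^((n+1)^2) ≤ (Tcount n : ℝ) := by
    intro n
    have h1 : 2^((n+1)^2) ≤ Tcount n := by
      unfold Tcount
      have := Nat.one_le_iff_ne_zero.mpr (Nat.factorial_ne_zero n)
      calc 2^((n+1)^2) = 1 * 2^((n+1)^2) := (one_mul _).symm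
        _ ≤ n.factorial * 2^((n+1)^2) := Nat.mul_le_mul_right _ this
    exact_mod_cast h1
  have h5 : Filter.Tendsto (fun n : ℕ => (n : ℝ)^5 / 2^n) Filter.atTop (nhds 0) :=
    tendsto_pow_const_div_const_pow_of_one_lt 5 (by norm_num)
  have hev : ∀ᶠ n : ℕ in Filter.atTop, (bad n : ℝ) / (Tcount n : ℝ) ≤ (1/2 : ℝ)^n := by
    have hev1 : ∀ᶠ n : ℕ in Filter.atTop, (n : ℝ)^5 / 2^n < 1/128 :=
      h5.eventually_lt_const (by norm_num)
    filter_upwards [hev1, Filter.eventually_ge_atTop 2] with n hn5 hn2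
    have hp2 : (0 : ℝ) < 2^n := by positivity
    have hn2' : (2 : ℝ) ≤ (n : ℝ) := by exact_mod_cast hn2
    have hkey : ((n : ℝ) + 2)^5 / 2^(n+1) ≤ 1/2 := by
      rw [div_le_iff₀ (by positivity)]
      have hA : ((n : ℝ) + 2)^5 ≤ (2 * n)^5 :=
        pow_le_pow_left₀ (by positivity) (by linarith) 5
      have hB : ((2 : ℝ) * n)^5 = 32 * (n : ℝ)^5 := by ring
      have hC : (n : ℝ)^5 < 2^n / 128 := by
        rw [lt_div_iff₀ (by norm_num)]
        calc (n:ℝ)^5 * 128 = ((n:ℝ)^5 / 2^n) * (128 * 2^n) := by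
              field_simp
            _ < (1/128) * (128 * 2^n) := by
              apply mul_lt_mul_of_pos_right hn5
              positivity
            _ = 2^n := by ring
      have hD : (1/2 : ℝ) * 2^(n+1) = 2^n := by
        rw [pow_succ]; ring
      rw [hD]
      nlinarith
    calc (bad n : ℝ) / (Tcount n : ℝ)
        ≤ ((n : ℝ) + 2)^(5*(n+1)) / (2 : ℝ)^((n+1)^2) := by
          apply div_le_div₀ (by positivity) (hbadB n) (by positivity) (hTge n)
      _ = (((n : ℝ) + 2)^5 / 2^(n+1))^(n+1) := by
          rw [div_pow, ← pow_mul, ← pow_mul, sq]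
      _ ≤ (1/2 : ℝ)^(n+1) := by
          apply pow_le_pow_left₀ (by positivity) hkey
      _ ≤ (1/2 : ℝ)^n := by
          apply pow_le_pow_of_le_one (by norm_num) (by norm_num)
          omega
  have hbadT : Filter.Tendsto (fun n : ℕ => (bad n : ℝ) / (Tcount n : ℝ))
      Filter.atTop (nhds 0) := by
    apply squeeze_zero' (Filter.Eventually.of_forall (fun n => by positivity)) hev
    exact tendsto_pow_atTop_nhds_zero_of_lt_one (by norm_num) (by norm_num)
  have hfinal : Filter.Tendsto (fun n : ℕ => 1 - (bad n : ℝ) / (Tcount n : ℝ))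
      Filter.atTop (nhds 1) := by
    have h := Filter.Tendsto.sub
      (tendsto_const_nhds : Filter.Tendsto (fun _ : ℕ => (1:ℝ)) Filter.atTop (nhds 1))
      hbadT
    simpa using h
  apply hfinal.congr
  intro n
  exact (hratio n).symm


end MeshPattern
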